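/- arXiv:1411.5748 — 17 statements merged into one kernel-verified Lean document; each statement's English description precedes it below -/
import Mathlib

section
/- For the generalized Fibonacci sequence F with F₀ = F₁ = 1 and Fₙ = i(Fₙ₋₁ + Fₙ₋₂) for n ≥ 2, one has the closed form F_{n+1} = (1/2)[(1 + 3√(i/(i+4)))·((i+√(i(i+4)))/2)ⁿ + (1 − 3√(i/(i+4)))·((i−√(i(i+4)))/2)ⁿ] for all n ≥ 0. -/
theorem F_closed_form (i : ℕ) (hi : 2 ≤ i) (F : ℕ → ℝ)
    (hF0 : F 0 = 1) (hF1 : F 1 = 1)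
    (hF : ∀ n, 2 ≤ n → F n = i * (F (n - 1) + F (n - 2))) :
    ∀ n : ℕ, F (n + 1) =
      (1 / 2) * ((1 + 3 * Real.sqrt (i / (i + 4))) * (((i : ℝ) + Real.sqrt (i * (i + 4))) / 2) ^ n
        + (1 - 3 * Real.sqrt (i / (i + 4))) * (((i : ℝ) - Real.sqrt (i * (i + 4))) / 2) ^ n) := by
  set x : ℝ := (i : ℝ) with hx
  have hx0 : (0:ℝ) ≤ x := by positivity
  set D := Real.sqrt (x * (x + 4)) with hDdef
  set s := Real.sqrt (x / (x + 4)) with hsdef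
  have hD2 : D ^ 2 = x * (x + 4) := Real.sq_sqrt (by positivity)
  have hsD : s * D = x := by
    rw [hsdef, hDdef, ← Real.sqrt_mul (by positivity),
      show x / (x + 4) * (x * (x + 4)) = x ^ 2 by field_simp,
      Real.sqrt_sq hx0]
  have hα : ((x + D) / 2) ^ 2 = x * ((x + D) / 2) + x := by linear_combination hD2 / 4
  have hβ : ((x - D) / 2) ^ 2 = x * ((x - D) / 2) + x := by linear_combination hD2 / 4
  intro n
  induction n using Nat.twoStepInduction with
  | zero => norm_num [hF1]
  | one =>
    rw [hF (1 + 1) (by norm_num)]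
    norm_num [hF0, hF1]
    linear_combination (-3/2) * hsD
  | more n ih1 ih2 =>
    rw [show n + 2 + 1 = n + 3 from rfl, hF (n + 3) (by omega),
      show n + 3 - 1 = n + 1 + 1 from rfl, show n + 3 - 2 = n + 1 from rfl, ih1, ih2]
    linear_combination (-(1 + 3*s)/2 * ((x + D)/2)^n) * hα + (-(1 - 3*s)/2 * ((x - D)/2)^n) * hβ
end

section
/- For the generalized Fibonacci sequence F (with F₀ = F₁ = 1, Fₙ = i(Fₙ₋₁+Fₙ₋₂)), we have F_{n+1}·F_{n−1} − Fₙ² = (2i−1)·(−i)^{n−1} for all n ≥ 1. -/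
theorem F_catalan_identity (i : ℕ) (hi : 2 ≤ i) (F : ℕ → ℝ)
    (hF0 : F 0 = 1) (hF1 : F 1 = 1)
    (hF : ∀ n, 2 ≤ n → F n = i * (F (n - 1) + F (n - 2))) :
    ∀ n : ℕ, 1 ≤ n → F (n + 1) * F (n - 1) - (F n) ^ 2 = (2 * (i : ℝ) - 1) * (-(i : ℝ)) ^ (n - 1) := by
  intro n hn
  induction n, hn using Nat.le_induction with
  | base =>
    have h2 := hF 2 (by norm_num)
    simp only [show (2:ℕ)-1 = 1 from rfl, show (2:ℕ)-2 = 0 from rfl] at h2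
    simp [h2, hF0, hF1]
    ring
  | succ n hn ih =>
    have h1 : F (n + 2) = i * (F (n + 1) + F n) := by
      have := hF (n + 2) (by omega)
      simpa using this
    have h2 : F (n + 1) = i * (F n + F (n - 1)) := by
      have := hF (n + 1) (by omega)
      have e1 : n + 1 - 1 = n := by omega
      have e2 : n + 1 - 2 = n - 1 := by omega
      rwa [e1, e2] at this
    have key : F (n + 2) * F n - F (n + 1) ^ 2
        = (-(i : ℝ)) * (F (n + 1) * F (n - 1) - F n ^ 2) := by
      linear_combination F n * h1 - F (n + 1) * h2
    have e3 : n + 1 - 1 = n := by omega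
    have e4 : (-(i:ℝ)) ^ n = (-(i:ℝ)) * (-(i:ℝ)) ^ (n - 1) := by
      rw [← pow_succ']
      congr 1
      omega
    rw [e3, key, ih, e4]
    ring
end

section
/- For the generalized Fibonacci sequence F, we have Fₙ·Fₙ₋₁ − F_{n+1}·F_{n−2} = (2i−1)·(−i)^{n−1} for all n ≥ 2. -/
theorem F_identity_2_7 (i : ℕ) (hi : 2 ≤ i) (F : ℕ → ℝ)
    (hF0 : F 0 = 1) (hF1 : F 1 = 1)
    (hF : ∀ n, 2 ≤ n → F n = i * (F (n - 1) + F (n - 2))) :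
    ∀ n : ℕ, 2 ≤ n → F n * F (n - 1) - F (n + 1) * F (n - 2) = (2 * (i : ℝ) - 1) * (-(i : ℝ)) ^ (n - 1) := by
  intro n hn
  induction n, hn using Nat.le_induction with
  | base =>
    have h2 := hF 2 (by norm_num)
    have h3 := hF 3 (by norm_num)
    norm_num at h2 h3 ⊢
    rw [h3, h2, hF0, hF1]
    ring
  | succ n hn ih =>
    have hFn := hF n hn
    have hF1' := hF (n + 1) (by omega)
    have hF2' := hF (n + 2) (by omega)
    simp only [Nat.add_sub_cancel, show n + 1 - 2 = n - 1 from by omega,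
      show n + 2 - 1 = n + 1 from rfl, show n + 2 - 2 = n from rfl] at hF1' hF2' ⊢
    have hpow : (-(i : ℝ)) ^ n = (-(i : ℝ)) ^ (n - 1) * (-(i : ℝ)) := by
      conv_lhs => rw [show n = (n - 1) + 1 from by omega]
      rw [pow_succ]
    rw [hpow, show n + 1 + 1 = n + 2 from rfl, hF2']
    have key2 : F n - i * F (n - 1) = i * F (n - 2) := by rw [hFn]; ring
    linear_combination (-(i : ℝ)) * ih + F (n + 1) * key2
end

section
/- Let ω = (√(i(i+4)) − i)/(2i). For the generalized Fibonacci sequence F, the sequence F_{2n−1}/F_{2n} is strictly increasing with limit ω, and the sequence F_{2n}/F_{2n+1} is strictly decreasing with limit ω, as n → ∞. -/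
open Filter

set_option maxHeartbeats 1000000 in
private lemma aux_ratio (i : ℕ) (hi : 2 ≤ i) (r : ℕ → ℝ) (hr0 : r 0 = 1)
    (hrpos : ∀ n, 0 < r n)
    (hrec : ∀ n, r (n + 1) = 1 / (i * (1 + r n)))
    (ω : ℝ) (hω1 : 0 < ω) (hω2 : (i : ℝ) * ω ^ 2 + i * ω = 1) :
    StrictMono (fun n : ℕ => r (2 * n + 1)) ∧
    Tendsto (fun n : ℕ => r (2 * n + 1)) atTop (nhds ω) ∧
    StrictAnti (fun n : ℕ => r (2 * n)) ∧
    Tendsto (fun n : ℕ => r (2 * n)) atTop (nhds ω) := by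
  have hi' : (2 : ℝ) ≤ i := by exact_mod_cast hi
  have hi0 : (0 : ℝ) < i := by linarith
  have hωhalf : ω < 1 / 2 := by nlinarith
  -- division-free step identity
  have hstep : ∀ n, (r (n + 1) - ω) * (1 + r n) = ω * (ω - r n) := by
    intro n
    have h1 : (0 : ℝ) < 1 + r n := by linarith [hrpos n]
    rw [hrec n]
    have hne : (i : ℝ) * (1 + r n) ≠ 0 := by positivity
    field_simp
    nlinarith [hω2, hrpos n]
  -- sign alternation
  have hsgn : ∀ n, ω < r (2 * n) ∧ r (2 * n + 1) < ω := by
    intro n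
    induction n with
    | zero =>
      constructor
      · rw [hr0]; linarith
      · have h := hstep 0
        rw [hr0] at h
        nlinarith
    | succ k ih =>
      obtain ⟨_, hodd⟩ := ih
      have heven : ω < r (2 * (k + 1)) := by
        have h := hstep (2 * k + 1)
        have := hrpos (2 * k + 1)
        have h2 : (2 : ℕ) * (k + 1) = 2 * k + 1 + 1 := by ring
        rw [h2]
        nlinarith
      refine ⟨heven, ?_⟩
      have h := hstep (2 * (k + 1))
      have := hrpos (2 * (k + 1))
      nlinarith
  -- two-step strict comparisons
  have hmono : ∀ n, r (2 * n + 1) < r (2 * (n + 1) + 1) := by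
    intro n
    obtain ⟨hev, hod⟩ := hsgn n
    obtain ⟨hev', hod'⟩ := hsgn (n + 1)
    have h1 := hstep (2 * n + 1)
    have h2 := hstep (2 * n + 2)
    have p1 := hrpos (2 * n + 1)
    have p2 := hrpos (2 * (n + 1))
    have e1 : 2 * n + 1 + 1 = 2 * (n + 1) := by ring
    have e2 : 2 * n + 2 + 1 = 2 * (n + 1) + 1 := by ring
    have e3 : 2 * n + 2 = 2 * (n + 1) := by ring
    rw [e1] at h1
    rw [e2, e3] at h2
    have hcomb : (r (2 * (n + 1) + 1) - ω) * ((1 + r (2 * (n + 1))) * (1 + r (2 * n + 1)))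
        = ω ^ 2 * (r (2 * n + 1) - ω) := by
      linear_combination (1 + r (2 * n + 1)) * h2 - ω * h1
    by_contra hcon
    push_neg at hcon
    have hApos : (0 : ℝ) < (1 + r (2 * (n + 1))) * (1 + r (2 * n + 1)) :=
      mul_pos (by linarith) (by linarith)
    have hA1 : (1 : ℝ) < (1 + r (2 * (n + 1))) * (1 + r (2 * n + 1)) := by
      nlinarith [mul_pos p2 p1]
    have hc1 : (r (2 * (n + 1) + 1) - ω) * ((1 + r (2 * (n + 1))) * (1 + r (2 * n + 1)))
        ≤ (r (2 * n + 1) - ω) * ((1 + r (2 * (n + 1))) * (1 + r (2 * n + 1))) :=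
      mul_le_mul_of_nonneg_right (by linarith) hApos.le
    have hc2 : (r (2 * n + 1) - ω) * ((1 + r (2 * (n + 1))) * (1 + r (2 * n + 1)))
        < r (2 * n + 1) - ω := by
      nlinarith [mul_pos (show (0:ℝ) < ω - r (2 * n + 1) by linarith)
        (show (0:ℝ) < (1 + r (2 * (n + 1))) * (1 + r (2 * n + 1)) - 1 by linarith)]
    have hc3 : r (2 * n + 1) - ω < ω ^ 2 * (r (2 * n + 1) - ω) := by
      nlinarith [mul_pos (show (0:ℝ) < ω - r (2 * n + 1) by linarith)
        (show (0:ℝ) < 1 - ω ^ 2 by nlinarith)]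
    linarith
  have hanti : ∀ n, r (2 * (n + 1)) < r (2 * n) := by
    intro n
    obtain ⟨hev, hod⟩ := hsgn n
    obtain ⟨hev', _⟩ := hsgn (n + 1)
    have h1 := hstep (2 * n)
    have h2 := hstep (2 * n + 1)
    have p0 := hrpos (2 * n)
    have p1 := hrpos (2 * n + 1)
    have e2 : (2 : ℕ) * n + 1 + 1 = 2 * (n + 1) := by ring
    rw [e2] at h2
    have hcomb : (r (2 * (n + 1)) - ω) * ((1 + r (2 * n + 1)) * (1 + r (2 * n)))
        = ω ^ 2 * (r (2 * n) - ω) := by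
      linear_combination (1 + r (2 * n)) * h2 - ω * h1
    by_contra hcon
    push_neg at hcon
    have hApos : (0 : ℝ) < (1 + r (2 * n + 1)) * (1 + r (2 * n)) :=
      mul_pos (by linarith) (by linarith)
    have hA1 : (1 : ℝ) < (1 + r (2 * n + 1)) * (1 + r (2 * n)) := by
      nlinarith [mul_pos p1 p0]
    have hc1 : (r (2 * n) - ω) * ((1 + r (2 * n + 1)) * (1 + r (2 * n)))
        ≤ (r (2 * (n + 1)) - ω) * ((1 + r (2 * n + 1)) * (1 + r (2 * n))) :=
      mul_le_mul_of_nonneg_right (by linarith) hApos.le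
    have hc2 : r (2 * n) - ω < (r (2 * n) - ω) * ((1 + r (2 * n + 1)) * (1 + r (2 * n))) := by
      nlinarith [mul_pos (show (0:ℝ) < r (2 * n) - ω by linarith)
        (show (0:ℝ) < (1 + r (2 * n + 1)) * (1 + r (2 * n)) - 1 by linarith)]
    have hc3 : ω ^ 2 * (r (2 * n) - ω) < r (2 * n) - ω := by
      nlinarith [mul_pos (show (0:ℝ) < r (2 * n) - ω by linarith)
        (show (0:ℝ) < 1 - ω ^ 2 by nlinarith)]
    linarith
  -- geometric decay
  have hdecay : ∀ n, |r (n + 1) - ω| ≤ (1 / 2) * |r n - ω| := by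
    intro n
    have h := hstep n
    have hp : (0 : ℝ) < 1 + r n := by linarith [hrpos n]
    have h1 : |r (n + 1) - ω| ≤ |r (n + 1) - ω| * (1 + r n) := by
      nlinarith [abs_nonneg (r (n + 1) - ω), hrpos n]
    have h2 : |r (n + 1) - ω| * (1 + r n) = ω * |r n - ω| := by
      rw [← abs_of_pos hp, ← abs_mul, h, abs_mul, abs_of_pos hω1, abs_sub_comm]
    calc |r (n + 1) - ω| ≤ ω * |r n - ω| := by rw [← h2]; exact h1
      _ ≤ (1 / 2) * |r n - ω| := by nlinarith [abs_nonneg (r n - ω)]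
  have hbound : ∀ n, |r n - ω| ≤ (1 / 2) ^ n * |r 0 - ω| := by
    intro n
    induction n with
    | zero => simp
    | succ k ih =>
      calc |r (k + 1) - ω| ≤ (1 / 2) * |r k - ω| := hdecay k
        _ ≤ (1 / 2) * ((1 / 2) ^ k * |r 0 - ω|) := by linarith
        _ = (1 / 2) ^ (k + 1) * |r 0 - ω| := by ring
  have htend : Tendsto r atTop (nhds ω) := by
    have h0 : Tendsto (fun n : ℕ => (1 / 2 : ℝ) ^ n * |r 0 - ω|) atTop (nhds 0) := by
      simpa using (tendsto_pow_atTop_nhds_zero_of_lt_one (r := (1/2 : ℝ)) (by norm_num) (by norm_num)).mul_const |r 0 - ω|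
    have h1 : Tendsto (fun n => r n - ω) atTop (nhds 0) := by
      apply squeeze_zero_norm _ h0
      intro n
      simpa [Real.norm_eq_abs] using hbound n
    have := h1.add_const ω
    simpa using this
  have h2n : Tendsto (fun n : ℕ => 2 * n) atTop atTop :=
    tendsto_atTop_atTop.mpr fun b => ⟨b, fun a ha => by omega⟩
  have h2n1 : Tendsto (fun n : ℕ => 2 * n + 1) atTop atTop :=
    tendsto_atTop_atTop.mpr fun b => ⟨b, fun a ha => by omega⟩
  refine ⟨?_, htend.comp h2n1, ?_, htend.comp h2n⟩
  · apply strictMono_nat_of_lt_succ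
    intro n
    exact hmono n
  · apply strictAnti_nat_of_succ_lt
    intro n
    exact hanti n

theorem F_ratio_monotone_to_omega (i : ℕ) (hi : 2 ≤ i) (F : ℕ → ℝ)
    (hF0 : F 0 = 1) (hF1 : F 1 = 1)
    (hF : ∀ n, 2 ≤ n → F n = i * (F (n - 1) + F (n - 2)))
    (ω : ℝ) (hω : ω = (Real.sqrt (i * (i + 4)) - i) / (2 * i)) :
    StrictMono (fun n : ℕ => F (2 * (n + 1) - 1) / F (2 * (n + 1))) ∧
    Filter.Tendsto (fun n : ℕ => F (2 * (n + 1) - 1) / F (2 * (n + 1))) Filter.atTop (nhds ω) ∧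
    StrictAnti (fun n : ℕ => F (2 * n) / F (2 * n + 1)) ∧
    Filter.Tendsto (fun n : ℕ => F (2 * n) / F (2 * n + 1)) Filter.atTop (nhds ω) := by
  have hi' : (2 : ℝ) ≤ i := by exact_mod_cast hi
  have hi0 : (0 : ℝ) < i := by linarith
  -- recurrence in convenient form
  have hFrec : ∀ n : ℕ, F (n + 2) = i * (F (n + 1) + F n) := by
    intro n
    have := hF (n + 2) (by omega)
    simpa using this
  -- positivity
  have hFpos : ∀ n, 0 < F n := by
    have key : ∀ n, 0 < F n ∧ 0 < F (n + 1) := by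
      intro n
      induction n with
      | zero => constructor <;> simp [hF0, hF1]
      | succ k ih =>
        refine ⟨ih.2, ?_⟩
        rw [hFrec k]
        nlinarith [ih.1, ih.2]
    exact fun n => (key n).1
  set r : ℕ → ℝ := fun n => F n / F (n + 1) with hr
  have hr0 : r 0 = 1 := by simp [hr, hF0, hF1]
  have hrpos : ∀ n, 0 < r n := fun n => div_pos (hFpos n) (hFpos (n + 1))
  have hrec : ∀ n, r (n + 1) = 1 / (i * (1 + r n)) := by
    intro n
    have h1 := hFpos n
    have h2 := hFpos (n + 1)
    simp only [hr]
    rw [hFrec n]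
    field_simp
  -- properties of ω
  have hs2 : Real.sqrt (i * (i + 4)) ^ 2 = (i : ℝ) * (i + 4) := by
    rw [Real.sq_sqrt]; positivity
  have hsgt : (i : ℝ) < Real.sqrt (i * (i + 4)) := by
    nlinarith [Real.sqrt_nonneg ((i : ℝ) * (i + 4)), hs2]
  have hω1 : 0 < ω := by
    rw [hω]
    apply div_pos (by linarith) (by linarith)
  have hω2 : (i : ℝ) * ω ^ 2 + i * ω = 1 := by
    have h : 2 * (i : ℝ) * ω + i = Real.sqrt (i * (i + 4)) := by
      rw [hω]; field_simp; ring
    nlinarith [hs2, h]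
  obtain ⟨h1, h2, h3, h4⟩ := aux_ratio i hi r hr0 hrpos hrec ω hω1 hω2
  have ea : (fun n : ℕ => F (2 * (n + 1) - 1) / F (2 * (n + 1))) = fun n : ℕ => r (2 * n + 1) := by
    funext n
    simp only [hr]
    congr 2
  have eb : (fun n : ℕ => F (2 * n) / F (2 * n + 1)) = fun n : ℕ => r (2 * n) := by
    funext n
    simp only [hr]
  rw [ea, eb]
  exact ⟨h1, h2, h3, h4⟩
end

section
/- Let ω = (√(i(i+4)) − i)/(2i). For the generalized Fibonacci sequence F, the sequence F_{2n−1}/F_{2n+1} is strictly increasing with limit ω², and F_{2n}/F_{2n+2} is strictly decreasing with limit ω², as n → ∞. -/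
open Filter

set_option maxHeartbeats 1000000 in
theorem F_ratio_monotone_to_omega_sq (i : ℕ) (hi : 2 ≤ i) (F : ℕ → ℝ)
    (hF0 : F 0 = 1) (hF1 : F 1 = 1)
    (hF : ∀ n, 2 ≤ n → F n = i * (F (n - 1) + F (n - 2)))
    (ω : ℝ) (hω : ω = (Real.sqrt (i * (i + 4)) - i) / (2 * i)) :
    StrictMono (fun n : ℕ => F (2 * (n + 1) - 1) / F (2 * (n + 1) + 1)) ∧
    Filter.Tendsto (fun n : ℕ => F (2 * (n + 1) - 1) / F (2 * (n + 1) + 1)) Filter.atTop (nhds (ω ^ 2)) ∧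
    StrictAnti (fun n : ℕ => F (2 * n) / F (2 * n + 2)) ∧
    Filter.Tendsto (fun n : ℕ => F (2 * n) / F (2 * n + 2)) Filter.atTop (nhds (ω ^ 2)) := by
  have hI : (2:ℝ) ≤ (i:ℝ) := by exact_mod_cast hi
  have hIpos : (0:ℝ) < (i:ℝ) := by linarith
  have hrec : ∀ n : ℕ, F (n+2) = i * (F (n+1) + F n) := by
    intro n
    have h := hF (n+2) (by omega)
    simpa using h
  have hpos : ∀ n, 0 < F n := by
    intro n
    induction n using Nat.strong_induction_on with
    | _ n ih =>
      match n, ih with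
      | 0, _ => rw [hF0]; norm_num
      | 1, _ => rw [hF1]; norm_num
      | (k+2), ih =>
        rw [hrec k]
        have h1 := ih (k+1) (by omega)
        have h0 := ih k (by omega)
        positivity
  -- Cassini-type identity
  have hCval : ∀ n, F (n+1)^2 - F n * F (n+2) = (-(i:ℝ))^n * (1 - 2*i) := by
    intro n
    induction n with
    | zero =>
      rw [hF0, hF1, hrec 0, hF0, hF1]; ring
    | succ n ih =>
      have h1 := hrec n
      have h2 := hrec (n+1)
      rw [show n+1+2 = n+3 from by omega] at h2
      rw [show n+1+2 = n+3 from by omega]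
      linear_combination (-(i:ℝ)) * ih + F (n+2) * h1 - F (n+1) * h2
  have hG : ∀ m, F (m+2)^2 - F m * F (m+4) = (i:ℝ)^2 * ((-(i:ℝ))^m * (1 - 2*i)) := by
    intro m
    have h1 := hrec m
    have h2 := hrec (m+1)
    have h3 := hrec (m+2)
    rw [show m+1+2 = m+3 from by omega] at h2
    rw [show m+2+2 = m+4 from by omega] at h3
    linear_combination ((i:ℝ)^2) * hCval m + (F (m+2) + (i:ℝ) * F (m+1)) * h1 - ((i:ℝ) * F m) * h2 - F m * h3
  -- the whole-sequence limit
  have hmain : Filter.Tendsto (fun m : ℕ => F m / F (m+2)) Filter.atTop (nhds (ω ^ 2)) := by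
    obtain ⟨s, hs⟩ : ∃ x : ℝ, x = Real.sqrt ((i:ℝ) * ((i:ℝ) + 4)) := ⟨_, rfl⟩
    rw [← hs] at hω
    have hDnn : (0:ℝ) ≤ (i:ℝ) * ((i:ℝ) + 4) := by positivity
    have hs2 : s^2 = (i:ℝ) * ((i:ℝ) + 4) := by rw [hs]; exact Real.sq_sqrt hDnn
    have hspos : 0 < s := by rw [hs]; exact Real.sqrt_pos.2 (by positivity)
    have hsi : (i:ℝ) < s := by nlinarith [hs2, hspos]
    obtain ⟨α, hα⟩ : ∃ x : ℝ, x = ((i:ℝ) + s) / 2 := ⟨_, rfl⟩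
    obtain ⟨β, hβ⟩ : ∃ x : ℝ, x = ((i:ℝ) - s) / 2 := ⟨_, rfl⟩
    have hαpos : 0 < α := by rw [hα]; positivity
    have hβneg : β < 0 := by rw [hβ]; linarith
    have hα2 : α^2 = (i:ℝ)*α + (i:ℝ) := by rw [hα]; nlinarith [hs2]
    have hβ2 : β^2 = (i:ℝ)*β + (i:ℝ) := by rw [hβ]; nlinarith [hs2]
    obtain ⟨A, hA⟩ : ∃ x : ℝ, x = (1 - β) / s := ⟨_, rfl⟩
    obtain ⟨B, hB⟩ : ∃ x : ℝ, x = (α - 1) / s := ⟨_, rfl⟩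
    have hApos : 0 < A := by rw [hA]; apply div_pos (by linarith) hspos
    have hclosed : ∀ n, F n = A * α^n + B * β^n := by
      intro n
      induction n using Nat.strong_induction_on with
      | _ n ih =>
        match n, ih with
        | 0, _ =>
          rw [hF0, hA, hB]
          field_simp
          rw [hα, hβ]; ring
        | 1, _ =>
          rw [hF1, hA, hB, hα, hβ]
          field_simp
          ring
        | (k+2), ih =>
          rw [hrec k, ih (k+1) (by omega), ih k (by omega)]
          rw [show k+2 = (k+1)+1 from by omega]
          linear_combination (-(A * α^k)) * hα2 + (-(B * β^k)) * hβ2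
    obtain ⟨q, hq⟩ : ∃ x : ℝ, x = β / α := ⟨_, rfl⟩
    have hq1 : |q| < 1 := by
      rw [hq, abs_div, abs_of_pos hαpos, div_lt_one hαpos, abs_of_neg hβneg, hα, hβ]
      linarith
    have hqn : Tendsto (fun m : ℕ => q^m) atTop (nhds 0) :=
      tendsto_pow_atTop_nhds_zero_of_abs_lt_one hq1
    have hωα : ω * α = 1 := by
      rw [hω, hα]
      field_simp
      nlinarith [hs2]
    have hden : α^2*(A + B*q^2*0) ≠ 0 := by
      rw [mul_zero, add_zero]; exact (mul_pos (pow_pos hαpos 2) hApos).ne'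
    have hRg : ∀ m, F m / F (m+2) = (A + B*q^m)/(α^2*(A + B*q^2*q^m)) := by
      intro m
      have hFm : F m = α^m * (A + B*q^m) := by
        rw [hclosed m, hq, div_pow]
        field_simp
      have hFm2 : F (m+2) = α^m * (α^2*(A + B*q^2*q^m)) := by
        rw [hclosed (m+2), hq, div_pow, div_pow]
        field_simp
        ring
      rw [hFm, hFm2, mul_div_mul_left _ _ (pow_ne_zero m hαpos.ne')]
    have h1 : Tendsto (fun m : ℕ => A + B*q^m) atTop (nhds (A + B*0)) :=
      tendsto_const_nhds.add (tendsto_const_nhds.mul hqn)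
    have h2 : Tendsto (fun m : ℕ => α^2*(A + B*q^2*q^m)) atTop (nhds (α^2*(A + B*q^2*0))) :=
      tendsto_const_nhds.mul (tendsto_const_nhds.add (tendsto_const_nhds.mul hqn))
    have h3 := h1.div h2 hden
    have hlim : (A+B*0)/(α^2*(A+B*q^2*0)) = ω^2 := by
      rw [mul_zero, add_zero, mul_zero, add_zero, div_eq_iff (mul_pos (pow_pos hαpos 2) hApos).ne']
      linear_combination (-(A*(ω*α+1)))*hωα
    have heq : (fun m : ℕ => F m / F (m+2)) = fun m : ℕ => (A + B*q^m)/(α^2*(A + B*q^2*q^m)) := by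
      funext m; exact hRg m
    rw [heq, ← hlim]
    exact h3
  have hcomp1 : Tendsto (fun n : ℕ => 2*n+1) atTop atTop :=
    tendsto_atTop_mono (fun n => by simp only [id_eq]; omega) tendsto_id
  have hcomp2 : Tendsto (fun n : ℕ => 2*n) atTop atTop :=
    tendsto_atTop_mono (fun n => by simp only [id_eq]; omega) tendsto_id
  refine ⟨?_, ?_, ?_, ?_⟩
  · apply strictMono_nat_of_lt_succ
    intro n
    show F (2*(n+1)-1) / F (2*(n+1)+1) < F (2*(n+1+1)-1) / F (2*(n+1+1)+1)
    rw [show 2*(n+1)-1 = 2*n+1 from by omega, show 2*(n+1)+1 = 2*n+3 from by omega,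
        show 2*(n+1+1)-1 = 2*n+3 from by omega, show 2*(n+1+1)+1 = 2*n+5 from by omega]
    rw [div_lt_div_iff₀ (hpos _) (hpos _)]
    have hGm := hG (2*n+1)
    rw [show 2*n+1+2 = 2*n+3 from by omega, show 2*n+1+4 = 2*n+5 from by omega] at hGm
    have hodd : Odd (2*n+1) := ⟨n, by omega⟩
    rw [Odd.neg_pow hodd] at hGm
    have hp : (0:ℝ) < (i:ℝ)^(2*n+1) := pow_pos hIpos _
    nlinarith [hGm, mul_pos (mul_pos (mul_pos hIpos hIpos) hp) (by linarith : (0:ℝ) < 2*(i:ℝ) - 1)]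
  · have heq : (fun n : ℕ => F (2*(n+1)-1) / F (2*(n+1)+1))
        = (fun m : ℕ => F m / F (m+2)) ∘ (fun n : ℕ => 2*n+1) := by
      funext n
      show F (2*(n+1)-1) / F (2*(n+1)+1) = F (2*n+1) / F (2*n+1+2)
      rw [show 2*(n+1)-1 = 2*n+1 from by omega, show 2*(n+1)+1 = 2*n+1+2 from by omega]
    rw [heq]
    exact hmain.comp hcomp1
  · apply strictAnti_nat_of_succ_lt
    intro n
    show F (2*(n+1)) / F (2*(n+1)+2) < F (2*n) / F (2*n+2)
    rw [show 2*(n+1) = 2*n+2 from by omega, show 2*n+2+2 = 2*n+4 from by omega]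
    rw [div_lt_div_iff₀ (hpos _) (hpos _)]
    have hGm := hG (2*n)
    rw [show 2*n+2+2 = 2*n+4 from by omega] at hGm
    have heven : Even (2*n) := ⟨n, by omega⟩
    rw [Even.neg_pow heven] at hGm
    have hp : (0:ℝ) < (i:ℝ)^(2*n) := pow_pos hIpos _
    nlinarith [hGm, mul_pos (mul_pos (mul_pos hIpos hIpos) hp) (by linarith : (0:ℝ) < 2*(i:ℝ) - 1)]
  · have heq : (fun n : ℕ => F (2*n) / F (2*n+2))
        = (fun m : ℕ => F m / F (m+2)) ∘ (fun n : ℕ => 2*n) := rfl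
    rw [heq]
    exact hmain.comp hcomp2
end

section
/- For the G-sequence, Gₙ·Gₘ − G_{n+1}·G_{m−1} = (−i)^m · G_{n−m} holds whenever n + 1 ≥ m ≥ 0. -/
theorem G_identity_2_12 (i : ℕ) (hi : 2 ≤ i) (G : ℤ → ℝ)
    (hGm1 : G (-1) = 0) (hG0 : G 0 = 1)
    (hG : ∀ n : ℤ, 1 ≤ n → G n = i * (G (n - 1) + G (n - 2))) :
    ∀ n m : ℤ, 0 ≤ m → m ≤ n + 1 →
      G n * G m - G (n + 1) * G (m - 1) = (-(i : ℝ)) ^ m * G (n - m) := by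
  have hine : (-(i : ℝ)) ≠ 0 := by
    have : (2:ℝ) ≤ (i:ℝ) := by exact_mod_cast hi
    intro h; nlinarith
  have key : ∀ k : ℕ, ∀ n : ℤ, (k : ℤ) ≤ n + 1 →
      G n * G k - G (n + 1) * G (k - 1) = (-(i : ℝ)) ^ (k : ℤ) * G (n - k) := by
    intro k
    induction k with
    | zero =>
      intro n _
      simp [hG0, hGm1]
    | succ k ih =>
      intro n hn
      have hkn : (k : ℤ) ≤ n := by push_cast at hn ⊢; omega
      have hk1 : G ((k : ℤ) + 1) = i * (G k + G ((k:ℤ) - 1)) := by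
        have := hG ((k:ℤ) + 1) (by omega)
        rwa [show (k:ℤ)+1-1 = (k:ℤ) from by ring, show (k:ℤ)+1-2 = (k:ℤ)-1 from by ring] at this
      have hn1 : G (n + 1) = i * (G n + G (n - 1)) := by
        have := hG (n + 1) (by omega)
        rwa [show n+1-1 = n from by ring, show n+1-2 = n-1 from by ring] at this
      have ihn := ih (n - 1) (by omega)
      rw [show n-1+1 = n from by ring] at ihn
      have hz : (-(i : ℝ)) ^ ((k : ℤ) + 1) = (-(i : ℝ)) ^ (k : ℤ) * (-(i:ℝ)) :=
        zpow_add_one₀ hine _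
      push_cast
      rw [show (k:ℤ) + 1 - 1 = (k:ℤ) by ring, hk1, hn1, hz,
        show n - ((k:ℤ) + 1) = n - 1 - k by ring]
      linear_combination (-(i:ℝ)) * ihn
  intro n m hm hmn
  obtain ⟨k, rfl⟩ := Int.eq_ofNat_of_zero_le hm
  exact key k n hmn
end

section
/- For the G-sequence, Gₙ·Gₘ − G_{n+2}·G_{m−2} = −(−i)^m · G_{n−m+1} holds whenever n + 1 ≥ m ≥ 1. -/
theorem G_identity_2_13 (i : ℕ) (hi : 2 ≤ i) (G : ℤ → ℝ)
    (hGm1 : G (-1) = 0) (hG0 : G 0 = 1)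
    (hG : ∀ n : ℤ, 1 ≤ n → G n = i * (G (n - 1) + G (n - 2))) :
    ∀ n m : ℤ, 1 ≤ m → m ≤ n + 1 →
      G n * G m - G (n + 2) * G (m - 2) = -(-(i : ℝ)) ^ m * G (n - m + 1) := by
  have keyK : ∀ k : ℕ, ∀ n : ℤ, (k : ℤ) ≤ n + 1 →
      G n * G k - G (n + 1) * G ((k : ℤ) - 1) = (-(i : ℝ)) ^ k * G (n - k) := by
    intro k
    induction k with
    | zero => intro n _; simp [hGm1, hG0]
    | succ k ih =>
      intro n hn
      have hk0 : (0 : ℤ) ≤ k := Int.natCast_nonneg k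
      have h1 : G ((k : ℤ) + 1) = i * (G ((k : ℤ) + 1 - 1) + G ((k : ℤ) + 1 - 2)) :=
        hG _ (by omega)
      have h2 : G (n + 1) = i * (G (n + 1 - 1) + G (n + 1 - 2)) := hG _ (by omega)
      have h3 := ih (n - 1) (by push_cast at hn ⊢; omega)
      push_cast at hn ⊢
      have e1 : (k : ℤ) + 1 - 1 = k := by ring
      have e2 : (k : ℤ) + 1 - 2 = k - 1 := by ring
      have e3 : n + 1 - 1 = n := by ring
      have e4 : n + 1 - 2 = n - 1 := by ring
      have e5 : n - 1 - k = n - (k + 1) := by ring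
      rw [e1, e2] at h1
      rw [e3, e4] at h2
      have e6 : n - 1 + 1 = n := by ring
      rw [e5, e6] at h3
      calc G n * G ((k : ℤ) + 1) - G (n + 1) * G ((k : ℤ) + 1 - 1)
          = G n * G ((k : ℤ) + 1) - G (n + 1) * G k := by rw [e1]
        _ = (-(i : ℝ)) ^ (k + 1) * G (n - (k + 1)) := by
            rw [h1, h2, pow_succ]
            linear_combination (-(i : ℝ)) * h3
  intro n m hm1 hm2
  obtain ⟨k, hm⟩ : ∃ k : ℕ, m = (k : ℤ) + 1 := ⟨(m - 1).toNat, by omega⟩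
  subst hm
  have hkey := keyK k n (by omega)
  have h1 : G ((k : ℤ) + 1) = i * (G ((k : ℤ) + 1 - 1) + G ((k : ℤ) + 1 - 2)) :=
    hG _ (by omega)
  have h2 : G (n + 2) = i * (G (n + 2 - 1) + G (n + 2 - 2)) := hG _ (by omega)
  have e1 : (k : ℤ) + 1 - 1 = k := by ring
  have e2 : (k : ℤ) + 1 - 2 = (k : ℤ) - 1 := by ring
  have e3 : n + 2 - 1 = n + 1 := by ring
  have e4 : n + 2 - 2 = n := by ring
  have e5 : n - ((k : ℤ) + 1) + 1 = n - k := by ring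
  rw [e1, e2] at h1
  rw [e3, e4] at h2
  rw [e2, e5]
  have hz : (-(i : ℝ)) ^ ((k : ℤ) + 1) = (-(i : ℝ)) ^ (k + 1 : ℕ) := by
    rw [show ((k : ℤ) + 1) = ((k + 1 : ℕ) : ℤ) by push_cast; ring, zpow_natCast]
  rw [hz, pow_succ, h1, h2]
  linear_combination (i : ℝ) * hkey
end

section
/- Let a, b, c, d be positive reals and n ≥ m ≥ 0 integers. Then (a·Gₘ + b·Gₘ₋₁)/(a·G_{n+1} + b·Gₙ) < (c·Gₘ + d·Gₘ₋₁)/(c·G_{n+1} + d·Gₙ) if and only if (−1)^m (ad − bc) < 0; similarly for > and =. -/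
lemma sign_iff_aux {x P u v : ℝ} (hP : 0 < P) (h : u - v = x * P) :
    (u < v ↔ x < 0) ∧ (v < u ↔ 0 < x) ∧ (u = v ↔ x = 0) := by
  refine ⟨⟨fun h1 => ?_, fun h1 => ?_⟩, ⟨fun h1 => ?_, fun h1 => ?_⟩,
    ⟨fun h1 => ?_, fun h1 => ?_⟩⟩
  · nlinarith
  · nlinarith
  · nlinarith
  · nlinarith
  · have hx : x * P = 0 := by linarith [h, sub_eq_zero_of_eq h1]
    rcases mul_eq_zero.mp hx with h2 | h2
    · exact h2
    · exact absurd h2 (ne_of_gt hP)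
  · have : u - v = 0 := by rw [h, h1, zero_mul]
    linarith

theorem G_ratio_comparison (i : ℕ) (hi : 2 ≤ i) (G : ℤ → ℝ)
    (hGm1 : G (-1) = 0) (hG0 : G 0 = 1)
    (hG : ∀ n : ℤ, 1 ≤ n → G n = i * (G (n - 1) + G (n - 2)))
    (a b c d : ℝ) (ha : 0 < a) (hb : 0 < b) (hc : 0 < c) (hd : 0 < d)
    (n m : ℤ) (hm : 0 ≤ m) (hnm : m ≤ n) :
    ((a * G m + b * G (m - 1)) / (a * G (n + 1) + b * G n)
        < (c * G m + d * G (m - 1)) / (c * G (n + 1) + d * G n)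
      ↔ (-1 : ℝ) ^ m * (a * d - b * c) < 0) ∧
    ((a * G m + b * G (m - 1)) / (a * G (n + 1) + b * G n)
        > (c * G m + d * G (m - 1)) / (c * G (n + 1) + d * G n)
      ↔ (-1 : ℝ) ^ m * (a * d - b * c) > 0) ∧
    ((a * G m + b * G (m - 1)) / (a * G (n + 1) + b * G n)
        = (c * G m + d * G (m - 1)) / (c * G (n + 1) + d * G n)
      ↔ (-1 : ℝ) ^ m * (a * d - b * c) = 0) := by
  have hi2 : (2:ℝ) ≤ (i:ℝ) := by exact_mod_cast hi
  -- positivity of G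
  have hposN : ∀ q : ℕ, 0 < G q ∧ 0 ≤ G ((q:ℤ) - 1) := by
    intro q
    induction q with
    | zero => simp [hG0, hGm1]
    | succ k ih =>
      have h1 := hG ((k:ℤ) + 1) (by omega)
      have e1 : (k:ℤ) + 1 - 1 = k := by ring
      have e2 : (k:ℤ) + 1 - 2 = (k:ℤ) - 1 := by ring
      rw [e1, e2] at h1
      push_cast
      rw [e1]
      constructor
      · rw [h1]; nlinarith [ih.1, ih.2]
      · exact le_of_lt ih.1
  have hpos : ∀ k : ℤ, 0 ≤ k → 0 < G k ∧ 0 ≤ G (k - 1) := by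
    intro k hk
    have e : ((k.toNat : ℤ)) = k := Int.toNat_of_nonneg hk
    have h := hposN k.toNat
    rwa [e] at h
  -- Cassini-type identity
  have cass : ∀ p : ℕ, ∀ n : ℤ, (p:ℤ) ≤ n →
      G p * G n - G ((p:ℤ) - 1) * G (n + 1)
        = (-1:ℝ) ^ p * (i:ℝ) ^ p * G (n - p) := by
    intro p
    induction p with
    | zero => intro n hn; simp [hG0, hGm1]
    | succ p ih =>
      intro n hn
      push_cast at hn ⊢
      have e1 := hG ((p:ℤ) + 1) (by omega)
      have e1a : (p:ℤ) + 1 - 1 = (p:ℤ) := by ring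
      have e1b : (p:ℤ) + 1 - 2 = (p:ℤ) - 1 := by ring
      rw [e1a, e1b] at e1
      have e2 := hG (n + 1) (by omega)
      have e2a : n + 1 - 1 = n := by ring
      have e2b : n + 1 - 2 = n - 1 := by ring
      rw [e2a, e2b] at e2
      have h3 := ih (n - 1) (by omega)
      have e3 : n - 1 - (p:ℤ) = n - ((p:ℤ) + 1) := by ring
      have e4 : n - 1 + 1 = n := by ring
      rw [e3, e4] at h3
      rw [e1a, e1, e2]
      linear_combination (-(i:ℝ)) * h3
  -- setup
  set p := m.toNat with hp
  have hm' : (p:ℤ) = m := Int.toNat_of_nonneg hm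
  have hzp : (-1:ℝ) ^ m = (-1:ℝ) ^ p := by rw [← hm', zpow_natCast]
  have key := cass p n (by omega)
  rw [hm'] at key
  have hGn1 : 0 < G (n + 1) := by
    have h := (hpos (n + 1) (by omega)).1; exact h
  have hGn : 0 ≤ G n := by
    have h := (hpos (n + 1) (by omega)).2
    have e : n + 1 - 1 = n := by ring
    rwa [e] at h
  have hGnm : 0 < G (n - m) := (hpos (n - m) (by omega)).1
  have hB : 0 < a * G (n + 1) + b * G n := by nlinarith
  have hD : 0 < c * G (n + 1) + d * G n := by nlinarith
  have hP : 0 < (i:ℝ) ^ p * G (n - m) := by positivity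
  have main : (a * G m + b * G (m - 1)) * (c * G (n + 1) + d * G n)
      - (c * G m + d * G (m - 1)) * (a * G (n + 1) + b * G n)
      = ((-1:ℝ) ^ p * (a * d - b * c)) * ((i:ℝ) ^ p * G (n - m)) := by
    linear_combination (a * d - b * c) * key
  obtain ⟨h1, h2, h3⟩ := sign_iff_aux hP main
  refine ⟨?_, ?_, ?_⟩
  · rw [div_lt_div_iff₀ hB hD, hzp, ← h1]
  · simp only [gt_iff_lt]
    rw [div_lt_div_iff₀ hD hB, hzp, ← h2]
  · rw [div_eq_div_iff hB.ne' hD.ne', hzp, ← h3]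
end

section
/- For the F- and G-sequences, Fₙ·Gₘ − F_{n+2}·G_{m−2} = −(−i)^m · F_{n−m+1} holds whenever n + 1 ≥ m ≥ 1. -/
theorem FG_identity_2_19 (i : ℕ) (hi : 2 ≤ i) (F G : ℤ → ℝ)
    (hF0 : F 0 = 1) (hF1 : F 1 = 1)
    (hF : ∀ n : ℤ, 2 ≤ n → F n = i * (F (n - 1) + F (n - 2)))
    (hGm1 : G (-1) = 0) (hG0 : G 0 = 1)
    (hG : ∀ n : ℤ, 1 ≤ n → G n = i * (G (n - 1) + G (n - 2))) :
    ∀ n m : ℤ, 1 ≤ m → m ≤ n + 1 →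
      F n * G m - F (n + 2) * G (m - 2) = -(-(i : ℝ)) ^ m * F (n - m + 1) := by
  have hine : (-(i : ℝ)) ≠ 0 := by
    have : (0:ℝ) < (i:ℝ) := by exact_mod_cast lt_of_lt_of_le (by norm_num) hi
    simp [this.ne']
  have key : ∀ m : ℤ, 1 ≤ m → ∀ n : ℤ, m ≤ n + 1 →
      F n * G m - F (n + 2) * G (m - 2) = -(-(i : ℝ)) ^ m * F (n - m + 1) := by
    refine Int.le_induction ?_ ?_
    · intro n hn
      have hG1 : G 1 = i := by
        have := hG 1 (by norm_num)
        norm_num [hGm1, hG0] at this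
        linarith
      rw [show (1:ℤ) - 2 = -1 by ring, show n - 1 + 1 = n by ring, hGm1, hG1,
        zpow_one]
      ring
    · intro m hm ih n hn
      have IH := ih (n - 1) (by linarith)
      rw [show n - 1 + 2 = n + 1 by ring, show n - 1 - m + 1 = n - m by ring] at IH
      have hGm1' := hG (m + 1) (by linarith)
      rw [show m + 1 - 1 = m by ring, show m + 1 - 2 = m - 1 by ring] at hGm1'
      have hGm := hG m (by linarith)
      have hFn1 := hF (n + 1) (by linarith)
      rw [show n + 1 - 1 = n by ring, show n + 1 - 2 = n - 1 by ring] at hFn1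
      have hFn2 := hF (n + 2) (by linarith)
      rw [show n + 2 - 1 = n + 1 by ring, show n + 2 - 2 = n by ring] at hFn2
      rw [show m + 1 - 2 = m - 1 by ring, show n - (m + 1) + 1 = n - m by ring,
        zpow_add_one₀ hine, hGm1', hFn2]
      linear_combination (-(i:ℝ)) * IH + ((i:ℝ) * (F n + F (n-1))) * hGm
        + (-(i:ℝ) * (G (m-1) + G (m-2))) * hFn1
  intro n m hm hmn
  exact key m hm n hmn
end

section
/- For all n ≥ 1, F_{2n−1}/F_{2n+1} < G_{2n−1}/G_{2n+1} < F_{2n+1}/F_{2n+3} and F_{2n}/F_{2n+2} < G_{2n−2}/G_{2n} < F_{2n−2}/F_{2n}. -/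
theorem FG_ratio_inequalities (i : ℕ) (hi : 2 ≤ i) (F G : ℤ → ℝ)
    (hF0 : F 0 = 1) (hF1 : F 1 = 1)
    (hF : ∀ n : ℤ, 2 ≤ n → F n = i * (F (n - 1) + F (n - 2)))
    (hGm1 : G (-1) = 0) (hG0 : G 0 = 1)
    (hG : ∀ n : ℤ, 1 ≤ n → G n = i * (G (n - 1) + G (n - 2))) :
    ∀ n : ℤ, 1 ≤ n →
      (F (2 * n - 1) / F (2 * n + 1) < G (2 * n - 1) / G (2 * n + 1) ∧
       G (2 * n - 1) / G (2 * n + 1) < F (2 * n + 1) / F (2 * n + 3)) ∧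
      (F (2 * n) / F (2 * n + 2) < G (2 * n - 2) / G (2 * n) ∧
       G (2 * n - 2) / G (2 * n) < F (2 * n - 2) / F (2 * n)) := by
  have hi2 : (2:ℝ) ≤ (i:ℝ) := by exact_mod_cast hi
  have hipos : (0:ℝ) < (i:ℝ) := by linarith
  -- recurrences with normalized indices
  have hFZ : ∀ m : ℤ, 0 ≤ m → F (m+2) = i * (F (m+1) + F m) := by
    intro m hm
    have h := hF (m+2) (by omega)
    rw [show m+2-1 = m+1 by ring, show m+2-2 = m by ring] at h
    exact h
  have hGZ : ∀ m : ℤ, 0 ≤ m → G (m+1) = i * (G m + G (m-1)) := by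
    intro m hm
    have h := hG (m+1) (by omega)
    rw [show m+1-1 = m by ring, show m+1-2 = m-1 by ring] at h
    exact h
  have hG1 : G 1 = (i:ℝ) := by
    have h := hGZ 0 le_rfl
    norm_num [hG0, hGm1] at h
    simpa using h
  -- positivity
  have Fpos2 : ∀ k : ℕ, 0 < F (k:ℤ) ∧ 0 < F ((k:ℤ)+1) := by
    intro k
    induction k with
    | zero => norm_num [hF0, hF1]
    | succ m ih =>
      push_cast
      refine ⟨ih.2, ?_⟩
      rw [show (m:ℤ)+1+1 = (m:ℤ)+2 by ring, hFZ (m:ℤ) (by positivity)]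
      nlinarith [ih.1, ih.2]
  have Fpos : ∀ k : ℕ, 0 < F (k:ℤ) := fun k => (Fpos2 k).1
  have Gpos2 : ∀ k : ℕ, 0 < G (k:ℤ) ∧ 0 < G ((k:ℤ)+1) := by
    intro k
    induction k with
    | zero =>
      constructor
      · norm_num [hG0]
      · norm_num [hG1]; linarith
    | succ m ih =>
      push_cast
      refine ⟨ih.2, ?_⟩
      rw [show (m:ℤ)+1+1 = (m:ℤ)+1+1 by ring, hGZ ((m:ℤ)+1) (by positivity)]
      rw [show (m:ℤ)+1-1 = (m:ℤ) by ring]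
      nlinarith [ih.1, ih.2]
  have Gpos : ∀ k : ℕ, 0 < G (k:ℤ) := fun k => (Gpos2 k).1
  -- Wronskian identity W
  have Wlem : ∀ k : ℕ,
      F ((k:ℤ)+1) * G (k:ℤ) - F (k:ℤ) * G ((k:ℤ)+1) = (-(i:ℝ))^k * (1 - i) := by
    intro k
    induction k with
    | zero => norm_num [hF0, hF1, hG0, hG1]
    | succ m ih =>
      push_cast
      rw [hGZ ((m:ℤ)+1) (by positivity), show (m:ℤ)+1-1 = (m:ℤ) by ring,
        show (m:ℤ)+1+1 = (m:ℤ)+2 by ring, hFZ (m:ℤ) (by positivity)]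
      linear_combination (-(i:ℝ)) * ih
  -- S identity
  have Slem : ∀ k : ℕ,
      F ((k:ℤ)+1) * G (k:ℤ) - F ((k:ℤ)+2) * G ((k:ℤ)-1) = (-(i:ℝ))^k := by
    intro k
    induction k with
    | zero => norm_num [hF1, hG0, hGm1]
    | succ m ih =>
      push_cast
      rw [show (m:ℤ)+1-1 = (m:ℤ) by ring, hFZ ((m:ℤ)+1) (by positivity),
        hGZ (m:ℤ) (by positivity), show (m:ℤ)+1+1 = (m:ℤ)+2 by ring]
      linear_combination (-(i:ℝ)) * ih
  -- U identity
  have hF2 : F 2 = 2 * (i:ℝ) := by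
    have h := hFZ 0 le_rfl
    norm_num [hF0, hF1] at h
    linear_combination h
  have hF3 : F 3 = (i:ℝ) * (2 * i + 1) := by
    have h := hFZ 1 (by norm_num)
    norm_num [hF1, hF2] at h
    linear_combination h
  have Ulem : ∀ k : ℕ,
      G (k:ℤ) * F ((k:ℤ)+3) - G ((k:ℤ)+1) * F ((k:ℤ)+2) = (-(i:ℝ))^k * i := by
    intro k
    induction k with
    | zero => norm_num [hG0, hG1, hF2, hF3]; ring
    | succ m ih =>
      push_cast
      rw [hGZ ((m:ℤ)+1) (by positivity), show (m:ℤ)+1-1 = (m:ℤ) by ring,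
        show (m:ℤ)+1+3 = ((m:ℤ)+2)+2 by ring, hFZ ((m:ℤ)+2) (by positivity),
        show (m:ℤ)+2+1 = (m:ℤ)+3 by ring, show (m:ℤ)+1+2 = (m:ℤ)+3 by ring]
      linear_combination (-(i:ℝ)) * ih
  have oddpow : ∀ k : ℕ, (-(i:ℝ))^(2*k+1) = -((i:ℝ)^(2*k+1)) :=
    fun k => Odd.neg_pow ⟨k, by ring⟩ _
  have evenpow : ∀ k : ℕ, (-(i:ℝ))^(2*k) = (i:ℝ)^(2*k) :=
    fun k => Even.neg_pow ⟨k, by ring⟩ _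
  -- main argument
  intro n hn
  obtain ⟨j, rfl⟩ := Int.le.dest hn
  rw [show 2*(1+(j:ℤ))-1 = 2*(j:ℤ)+1 by ring, show 2*(1+(j:ℤ))+1 = 2*(j:ℤ)+3 by ring,
    show 2*(1+(j:ℤ))+3 = 2*(j:ℤ)+5 by ring, show 2*(1+(j:ℤ))+2 = 2*(j:ℤ)+4 by ring,
    show 2*(1+(j:ℤ))-2 = 2*(j:ℤ) by ring, show 2*(1+(j:ℤ)) = 2*(j:ℤ)+2 by ring]
  have pF1 : 0 < F (2*(j:ℤ)+1) := by have := Fpos (2*j+1); push_cast at this; exact this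
  have pF2 : 0 < F (2*(j:ℤ)+2) := by have := Fpos (2*j+2); push_cast at this; exact this
  have pF3 : 0 < F (2*(j:ℤ)+3) := by have := Fpos (2*j+3); push_cast at this; exact this
  have pF4 : 0 < F (2*(j:ℤ)+4) := by have := Fpos (2*j+4); push_cast at this; exact this
  have pF5 : 0 < F (2*(j:ℤ)+5) := by have := Fpos (2*j+5); push_cast at this; exact this
  have pG0 : 0 < G (2*(j:ℤ)) := by have := Gpos (2*j); push_cast at this; exact this
  have pG2 : 0 < G (2*(j:ℤ)+2) := by have := Gpos (2*j+2); push_cast at this; exact this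
  have pG3 : 0 < G (2*(j:ℤ)+3) := by have := Gpos (2*j+3); push_cast at this; exact this
  refine ⟨⟨?_, ?_⟩, ?_, ?_⟩
  · -- F(2j+1)/F(2j+3) < G(2j+1)/G(2j+3)
    rw [div_lt_div_iff₀ pF3 pG3]
    have w := Wlem (2*j+1)
    push_cast at w
    rw [oddpow j] at w
    rw [show 2*(j:ℤ)+1+1 = 2*(j:ℤ)+2 by ring] at w
    have hGe := hGZ (2*(j:ℤ)+2) (by positivity)
    rw [show 2*(j:ℤ)+2+1 = 2*(j:ℤ)+3 by ring, show 2*(j:ℤ)+2-1 = 2*(j:ℤ)+1 by ring] at hGe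
    have hFe := hFZ (2*(j:ℤ)+1) (by positivity)
    rw [show 2*(j:ℤ)+1+2 = 2*(j:ℤ)+3 by ring, show 2*(j:ℤ)+1+1 = 2*(j:ℤ)+2 by ring] at hFe
    have key : F (2*(j:ℤ)+1) * G (2*(j:ℤ)+3) - G (2*(j:ℤ)+1) * F (2*(j:ℤ)+3)
        = -((i:ℝ)^(2*j+2) * ((i:ℝ) - 1)) := by
      rw [hGe, hFe]
      linear_combination (-(i:ℝ)) * w
    have hp : 0 < (i:ℝ)^(2*j+2) * ((i:ℝ) - 1) :=
      mul_pos (pow_pos hipos _) (by linarith)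
    linarith [key, hp]
  · -- G(2j+1)/G(2j+3) < F(2j+3)/F(2j+5)
    rw [div_lt_div_iff₀ pG3 pF5]
    have u := Ulem (2*j+1)
    push_cast at u
    rw [oddpow j] at u
    rw [show 2*(j:ℤ)+1+3 = 2*(j:ℤ)+4 by ring, show 2*(j:ℤ)+1+1 = 2*(j:ℤ)+2 by ring,
      show 2*(j:ℤ)+1+2 = 2*(j:ℤ)+3 by ring] at u
    have hFe := hFZ (2*(j:ℤ)+3) (by positivity)
    rw [show 2*(j:ℤ)+3+2 = 2*(j:ℤ)+5 by ring, show 2*(j:ℤ)+3+1 = 2*(j:ℤ)+4 by ring] at hFe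
    have hGe := hGZ (2*(j:ℤ)+2) (by positivity)
    rw [show 2*(j:ℤ)+2+1 = 2*(j:ℤ)+3 by ring, show 2*(j:ℤ)+2-1 = 2*(j:ℤ)+1 by ring] at hGe
    have key : G (2*(j:ℤ)+1) * F (2*(j:ℤ)+5) - F (2*(j:ℤ)+3) * G (2*(j:ℤ)+3)
        = -((i:ℝ)^(2*j+3)) := by
      rw [hFe, hGe]
      linear_combination (i:ℝ) * u
    have hp : 0 < (i:ℝ)^(2*j+3) := pow_pos hipos _
    linarith [key, hp]
  · -- F(2j+2)/F(2j+4) < G(2j)/G(2j+2)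
    rw [div_lt_div_iff₀ pF4 pG2]
    have s := Slem (2*j+1)
    push_cast at s
    rw [oddpow j] at s
    rw [show 2*(j:ℤ)+1+1 = 2*(j:ℤ)+2 by ring, show 2*(j:ℤ)+1+2 = 2*(j:ℤ)+3 by ring,
      show 2*(j:ℤ)+1-1 = 2*(j:ℤ) by ring] at s
    have hGe := hGZ (2*(j:ℤ)+1) (by positivity)
    rw [show 2*(j:ℤ)+1+1 = 2*(j:ℤ)+2 by ring, show 2*(j:ℤ)+1-1 = 2*(j:ℤ) by ring] at hGe
    have hFe := hFZ (2*(j:ℤ)+2) (by positivity)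
    rw [show 2*(j:ℤ)+2+2 = 2*(j:ℤ)+4 by ring, show 2*(j:ℤ)+2+1 = 2*(j:ℤ)+3 by ring] at hFe
    have key : F (2*(j:ℤ)+2) * G (2*(j:ℤ)+2) - G (2*(j:ℤ)) * F (2*(j:ℤ)+4)
        = -((i:ℝ)^(2*j+2)) := by
      rw [hGe, hFe]
      linear_combination (i:ℝ) * s
    have hp : 0 < (i:ℝ)^(2*j+2) := pow_pos hipos _
    linarith [key, hp]
  · -- G(2j)/G(2j+2) < F(2j)/F(2j+2)
    rw [div_lt_div_iff₀ pG2 pF2]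
    have w := Wlem (2*j)
    push_cast at w
    rw [evenpow j] at w
    have hFe := hFZ (2*(j:ℤ)) (by positivity)
    have hGe := hGZ (2*(j:ℤ)+1) (by positivity)
    rw [show 2*(j:ℤ)+1+1 = 2*(j:ℤ)+2 by ring, show 2*(j:ℤ)+1-1 = 2*(j:ℤ) by ring] at hGe
    have key : G (2*(j:ℤ)) * F (2*(j:ℤ)+2) - F (2*(j:ℤ)) * G (2*(j:ℤ)+2)
        = -((i:ℝ)^(2*j+1) * ((i:ℝ) - 1)) := by
      rw [hFe, hGe]
      linear_combination (i:ℝ) * w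
    have hp : 0 < (i:ℝ)^(2*j+1) * ((i:ℝ) - 1) :=
      mul_pos (pow_pos hipos _) (by linarith)
    linarith [key, hp]
end

section
/- Let ω = (√(i(i+4)) − i)/(2i). Then lim_{n→∞} F_{n+1}·ωⁿ = 1/2 + (3/2)·√(i/(i+4)) = (2(i+1) + 3iω)/(i+4). Moreover, F_{2n+1}·ω^{2n} is increasing and F_{2n+2}·ω^{2n+1} is decreasing, both converging to this limit. -/
set_option maxHeartbeats 800000

theorem F_omega_limit (i : ℕ) (hi : 2 ≤ i) (F : ℕ → ℝ)
    (hF0 : F 0 = 1) (hF1 : F 1 = 1)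
    (hF : ∀ n, 2 ≤ n → F n = i * (F (n - 1) + F (n - 2)))
    (ω : ℝ) (hω : ω = (Real.sqrt (i * (i + 4)) - i) / (2 * i)) :
    (1 / 2 + (3 / 2) * Real.sqrt (i / (i + 4)) = (2 * ((i : ℝ) + 1) + 3 * i * ω) / (i + 4)) ∧
    Filter.Tendsto (fun n : ℕ => F (n + 1) * ω ^ n) Filter.atTop
      (nhds (1 / 2 + (3 / 2) * Real.sqrt (i / (i + 4)))) ∧
    Monotone (fun n : ℕ => F (2 * n + 1) * ω ^ (2 * n)) ∧
    Antitone (fun n : ℕ => F (2 * n + 2) * ω ^ (2 * n + 1)) ∧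
    Filter.Tendsto (fun n : ℕ => F (2 * n + 1) * ω ^ (2 * n)) Filter.atTop
      (nhds (1 / 2 + (3 / 2) * Real.sqrt (i / (i + 4)))) ∧
    Filter.Tendsto (fun n : ℕ => F (2 * n + 2) * ω ^ (2 * n + 1)) Filter.atTop
      (nhds (1 / 2 + (3 / 2) * Real.sqrt (i / (i + 4)))) := by
  have hI : (2:ℝ) ≤ (i:ℝ) := by exact_mod_cast hi
  have hI0 : (0:ℝ) < (i:ℝ) := by linarith
  obtain ⟨s, hs_def⟩ : ∃ s : ℝ, s = Real.sqrt ((i:ℝ) * ((i:ℝ) + 4)) := ⟨_, rfl⟩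
  have hsqI : s ^ 2 = (i:ℝ) * ((i:ℝ) + 4) := by rw [hs_def]; exact Real.sq_sqrt (by positivity)
  have hs_pos : (0:ℝ) < s := by rw [hs_def]; exact Real.sqrt_pos.mpr (by positivity)
  have hsI : (i:ℝ) < s := by nlinarith [hsqI, hs_pos]
  have hs_lt : s < (i:ℝ) + 2 := by nlinarith [hsqI, hs_pos]
  have hω' : ω = (s - (i:ℝ)) / (2 * (i:ℝ)) := by rw [hω, hs_def]
  obtain ⟨α, hα_def⟩ : ∃ a : ℝ, a = ((i:ℝ) + s) / 2 := ⟨_, rfl⟩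
  obtain ⟨β, hβ_def⟩ : ∃ b : ℝ, b = ((i:ℝ) - s) / 2 := ⟨_, rfl⟩
  have hα2 : α ^ 2 = (i:ℝ) * α + i := by rw [hα_def]; linear_combination hsqI / 4
  have hβ2 : β ^ 2 = (i:ℝ) * β + i := by rw [hβ_def]; linear_combination hsqI / 4
  have hωα : ω * α = 1 := by
    rw [hω', hα_def]
    field_simp
    linear_combination hsqI
  obtain ⟨A, hA_def⟩ : ∃ a : ℝ, a = (1 - β) / s := ⟨_, rfl⟩
  have hAs : A * s = 1 - β := by rw [hA_def]; field_simp
  obtain ⟨L, hL_def⟩ : ∃ l : ℝ, l = A * α := ⟨_, rfl⟩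
  obtain ⟨c, hc_def⟩ : ∃ x : ℝ, x = (1 - A) * β := ⟨_, rfl⟩
  obtain ⟨r, hr_def⟩ : ∃ x : ℝ, x = β * ω := ⟨_, rfl⟩
  have hαβ : α - β = s := by rw [hα_def, hβ_def]; ring
  -- closed form
  have hclosed : ∀ n : ℕ, F n = A * α ^ n + (1 - A) * β ^ n ∧
      F (n+1) = A * α ^ (n+1) + (1 - A) * β ^ (n+1) := by
    intro n
    induction n with
    | zero =>
      refine ⟨by simp [hF0], ?_⟩
      rw [hF1]
      linear_combination (-1 : ℝ) * hAs - A * hαβ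
    | succ n ih =>
      refine ⟨ih.2, ?_⟩
      have hrec : F (n + 2) = (i:ℝ) * (F (n + 1) + F n) := hF (n + 2) (by omega)
      have e1 : α ^ (n + 2) = (i:ℝ) * α ^ (n + 1) + (i:ℝ) * α ^ n := by
        calc α ^ (n + 2) = α ^ n * α ^ 2 := by ring
          _ = α ^ n * ((i:ℝ) * α + i) := by rw [hα2]
          _ = (i:ℝ) * α ^ (n + 1) + (i:ℝ) * α ^ n := by ring
      have e2 : β ^ (n + 2) = (i:ℝ) * β ^ (n + 1) + (i:ℝ) * β ^ n := by
        calc β ^ (n + 2) = β ^ n * β ^ 2 := by ring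
          _ = β ^ n * ((i:ℝ) * β + i) := by rw [hβ2]
          _ = (i:ℝ) * β ^ (n + 1) + (i:ℝ) * β ^ n := by ring
      show F (n + 2) = A * α ^ (n + 2) + (1 - A) * β ^ (n + 2)
      linear_combination hrec + (i:ℝ) * ih.2 + (i:ℝ) * ih.1 - A * e1 - (1 - A) * e2
  -- key formula
  have hterm : ∀ n : ℕ, F (n + 1) * ω ^ n = L + c * r ^ n := by
    intro n
    have h1 : α ^ n * ω ^ n = 1 := by
      rw [← mul_pow, mul_comm α ω, hωα, one_pow]
    have h2 : r ^ n = β ^ n * ω ^ n := by rw [hr_def, mul_pow]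
    rw [(hclosed n).2, hL_def, hc_def, h2]
    linear_combination (A * α) * h1
  -- sign facts
  have hω_pos : 0 < ω := by
    rw [hω']
    apply div_pos (by linarith) (by linarith)
  have hβ_neg : β < 0 := by rw [hβ_def]; linarith
  have hr_neg : r < 0 := hr_def ▸ mul_neg_of_neg_of_pos hβ_neg hω_pos
  have hr_gt : -1 < r := by
    have hrval : r = -((s - (i:ℝ)) ^ 2 / (4 * (i:ℝ))) := by
      rw [hr_def, hβ_def, hω']
      field_simp
      ring
    rw [hrval, neg_lt, neg_neg, div_lt_one (by linarith)]
    nlinarith [hsI, hs_lt]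
  have hA_lt : A < 1 := by
    rw [hA_def, div_lt_one hs_pos, hβ_def]; linarith
  have hc_neg : c < 0 := hc_def ▸ mul_neg_of_pos_of_neg (by linarith) hβ_neg
  have hr2_lt : r ^ 2 < 1 := by nlinarith
  have hr2_nonneg : 0 ≤ r ^ 2 := sq_nonneg r
  -- value of L
  have hsq : Real.sqrt ((i:ℝ) / ((i:ℝ) + 4)) = (i:ℝ) / s := by
    have h : ((i:ℝ) / s) ^ 2 = (i:ℝ) / ((i:ℝ) + 4) := by
      rw [div_pow, hsqI]
      field_simp
    rw [← h, Real.sqrt_sq (by positivity)]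
  have hLval : L = 1 / 2 + 3 / 2 * ((i:ℝ) / s) := by
    rw [hL_def, hA_def, hα_def, hβ_def]
    field_simp
    linear_combination hsqI
  have hLgoal : (1:ℝ) / 2 + 3 / 2 * Real.sqrt ((i:ℝ) / ((i:ℝ) + 4)) = L := by
    rw [hsq, hLval]
  -- first conjunct
  have hfirst : (1:ℝ) / 2 + (3 / 2) * Real.sqrt ((i:ℝ) / ((i:ℝ) + 4))
      = (2 * ((i : ℝ) + 1) + 3 * (i:ℝ) * ω) / ((i:ℝ) + 4) := by
    rw [hsq, hω']
    have h4 : (0:ℝ) < (i:ℝ) + 4 := by linarith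
    field_simp
    linear_combination (-3 : ℝ) * hsqI
  -- main limit
  have habs : |r| < 1 := by rw [abs_lt]; exact ⟨hr_gt, by linarith⟩
  have hmain : Filter.Tendsto (fun n : ℕ => F (n + 1) * ω ^ n) Filter.atTop (nhds L) := by
    have h0 : Filter.Tendsto (fun n : ℕ => L + c * r ^ n) Filter.atTop (nhds (L + c * 0)) :=
      tendsto_const_nhds.add
        (tendsto_const_nhds.mul (tendsto_pow_atTop_nhds_zero_of_abs_lt_one habs))
    rw [mul_zero, add_zero] at h0
    exact h0.congr fun n => (hterm n).symm
  have h2n : Filter.Tendsto (fun n : ℕ => 2 * n) Filter.atTop Filter.atTop :=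
    Filter.tendsto_atTop_mono (fun n => by simp only [id_eq]; omega) Filter.tendsto_id
  have h2n1 : Filter.Tendsto (fun n : ℕ => 2 * n + 1) Filter.atTop Filter.atTop :=
    Filter.tendsto_atTop_mono (fun n => by simp only [id_eq]; omega) Filter.tendsto_id
  have hodd : Filter.Tendsto (fun n : ℕ => F (2 * n + 1) * ω ^ (2 * n)) Filter.atTop (nhds L) :=
    hmain.comp h2n
  have heven : Filter.Tendsto (fun n : ℕ => F (2 * n + 2) * ω ^ (2 * n + 1)) Filter.atTop
      (nhds L) := hmain.comp h2n1
  -- monotonicity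
  have hterm2 : ∀ n : ℕ, F (2 * n + 1) * ω ^ (2 * n) = L + c * (r ^ 2) ^ n := by
    intro n
    rw [hterm (2 * n), pow_mul]
  have hterm3 : ∀ n : ℕ, F (2 * n + 2) * ω ^ (2 * n + 1) = L + (c * r) * (r ^ 2) ^ n := by
    intro n
    have h := hterm (2 * n + 1)
    rw [show 2 * n + 1 + 1 = 2 * n + 2 from rfl] at h
    rw [h, pow_succ, pow_mul]
    ring
  have hmono : Monotone (fun n : ℕ => F (2 * n + 1) * ω ^ (2 * n)) := by
    intro m n hmn
    simp only
    rw [hterm2 m, hterm2 n]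
    have hle : (r ^ 2) ^ n ≤ (r ^ 2) ^ m :=
      pow_le_pow_of_le_one hr2_nonneg (le_of_lt hr2_lt) hmn
    nlinarith [mul_le_mul_of_nonpos_left hle (le_of_lt hc_neg)]
  have hanti : Antitone (fun n : ℕ => F (2 * n + 2) * ω ^ (2 * n + 1)) := by
    intro m n hmn
    simp only
    rw [hterm3 m, hterm3 n]
    have hle : (r ^ 2) ^ n ≤ (r ^ 2) ^ m :=
      pow_le_pow_of_le_one hr2_nonneg (le_of_lt hr2_lt) hmn
    have hcr : 0 < c * r := mul_pos_of_neg_of_neg hc_neg hr_neg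
    nlinarith [mul_le_mul_of_nonneg_left hle (le_of_lt hcr)]
  refine ⟨hfirst, hLgoal ▸ hmain, hmono, hanti, hLgoal ▸ hodd, hLgoal ▸ heven⟩
end

section
/- Let ω = (√(i(i+4)) − i)/(2i). Then sup_{n≥0} F_{n+1}·ωⁿ = F₂·ω = 2iω. -/
theorem F_omega_sup (i : ℕ) (hi : 2 ≤ i) (F : ℕ → ℝ)
    (hF0 : F 0 = 1) (hF1 : F 1 = 1)
    (hF : ∀ n, 2 ≤ n → F n = i * (F (n - 1) + F (n - 2)))
    (ω : ℝ) (hω : ω = (Real.sqrt (i * (i + 4)) - i) / (2 * i)) :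
    (⨆ n : ℕ, F (n + 1) * ω ^ n) = F 2 * ω ∧ F 2 * ω = 2 * i * ω := by
  have hipos : (0:ℝ) < i := by
    have : (2:ℝ) ≤ i := by exact_mod_cast hi
    linarith
  set s := Real.sqrt (i * (i + 4)) with hsdef
  have hs0 : 0 ≤ s := Real.sqrt_nonneg _
  have hs2 : s * s = i * (i + 4) := Real.mul_self_sqrt (by positivity)
  have hi2 : (2:ℝ) ≤ i := by exact_mod_cast hi
  have hsge : (i:ℝ) + 1 ≤ s := by
    rw [hsdef, show (i:ℝ) + 1 = Real.sqrt ((i+1)^2) by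
      rw [Real.sqrt_sq (by positivity)]]
    apply Real.sqrt_le_sqrt
    nlinarith
  have hsgt : (i:ℝ) < s := by linarith
  have hωpos : 0 < ω := by
    rw [hω]; apply div_pos (by linarith) (by positivity)
  have key : i * ω + i * ω ^ 2 = 1 := by
    rw [hω]; field_simp; nlinarith [hs2]
  have hF2 : F 2 = 2 * i := by
    have := hF 2 (le_refl 2)
    simp only [show (2:ℕ)-1 = 1 from rfl, show (2:ℕ)-2 = 0 from rfl, hF0, hF1] at this
    linarith
  have h2iw : 2 * (i:ℝ) * ω = s - i := by
    rw [hω]; field_simp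
  have h1le : (1:ℝ) ≤ 2 * i * ω := by rw [h2iw]; linarith
  have bound : ∀ n, F (n + 1) * ω ^ n ≤ 2 * i * ω := by
    intro n
    induction n using Nat.strong_induction_on with
    | _ n ih =>
      match n, ih with
      | 0, _ => simpa [hF1] using h1le
      | 1, _ => rw [hF2, pow_one]
      | (m+2), ih =>
        have h1 := ih (m+1) (by omega)
        have h0 := ih m (by omega)
        have hrec := hF (m+3) (by omega)
        have hidx : F (m+2+1) * ω ^ (m+2) =
            (i*ω) * (F (m+1+1) * ω^(m+1)) + (i*ω^2) * (F (m+1) * ω^m) := by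
          have e1 : m + 3 - 1 = m + 2 := by omega
          have e2 : m + 3 - 2 = m + 1 := by omega
          rw [show m+2+1 = m+3 from rfl, hrec, e1, e2]; ring
        rw [hidx]
        have hiw : 0 ≤ (i:ℝ)*ω := by positivity
        have hiw2 : 0 ≤ (i:ℝ)*ω^2 := by positivity
        have hb : 0 ≤ 2 * (i:ℝ) * ω := by positivity
        nlinarith [mul_le_mul_of_nonneg_left h1 hiw, mul_le_mul_of_nonneg_left h0 hiw2]
  have hbdd : BddAbove (Set.range fun n : ℕ => F (n + 1) * ω ^ n) := by
    refine ⟨2 * i * ω, ?_⟩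
    rintro x ⟨n, rfl⟩
    exact bound n
  constructor
  · apply le_antisymm
    · apply ciSup_le
      intro n
      calc F (n+1) * ω^n ≤ 2 * i * ω := bound n
        _ = F 2 * ω := by rw [hF2]
    · have := le_ciSup hbdd 1
      simpa using this
  · rw [hF2]
end

section
/- Let ω = (√(i(i+4)) − i)/(2i) and δ = i²(2i+3)·ω³. Then δ = i(2i+3)(1 − iω)ω = i(2i+3)((i+1)ω − 1) = ((2i+3)/2)·((i+1)√(i(i+4)) − i(i+3)), and δ < 2. -/
theorem delta_expressions (i : ℕ) (hi : 2 ≤ i)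
    (ω : ℝ) (hω : ω = (Real.sqrt (i * (i + 4)) - i) / (2 * i))
    (δ : ℝ) (hδ : δ = (i : ℝ) ^ 2 * (2 * i + 3) * ω ^ 3) :
    δ = (i : ℝ) * (2 * i + 3) * (1 - i * ω) * ω ∧
    δ = (i : ℝ) * (2 * i + 3) * ((i + 1) * ω - 1) ∧
    δ = ((2 * (i : ℝ) + 3) / 2) * (((i : ℝ) + 1) * Real.sqrt (i * (i + 4)) - i * (i + 3)) ∧
    δ < 2 := by
  have hi' : (2:ℝ) ≤ (i:ℝ) := by exact_mod_cast hi
  have hi0 : (i:ℝ) ≠ 0 := by linarith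
  set s := Real.sqrt (i * (i + 4)) with hs
  have hs0 : 0 ≤ s := Real.sqrt_nonneg _
  have hs2 : s ^ 2 = (i:ℝ) * ((i:ℝ) + 4) := by
    rw [hs]
    rw [Real.sq_sqrt (by positivity : (0:ℝ) ≤ (i:ℝ) * ((i:ℝ) + 4))]
  have key : (i:ℝ) * ω ^ 2 = 1 - (i:ℝ) * ω := by
    rw [hω]; field_simp; nlinarith [hs2]
  have h1 : δ = (i : ℝ) * (2 * i + 3) * (1 - i * ω) * ω := by
    rw [hδ, ← key]; ring
  have h2 : δ = (i : ℝ) * (2 * i + 3) * ((i + 1) * ω - 1) := by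
    rw [h1]; nlinarith [key]
  have h3 : δ = ((2 * (i : ℝ) + 3) / 2) * (((i : ℝ) + 1) * s - i * (i + 3)) := by
    rw [h2, hω]; field_simp; ring
  have hslt : s < (i:ℝ) + 2 := by
    nlinarith [hs2, hs0]
  refine ⟨h1, h2, h3, ?_⟩
  rw [h3]
  have hA : (((i:ℝ)+1)*s*(2*(i:ℝ)+3))^2 = ((i:ℝ)+1)^2*(2*(i:ℝ)+3)^2*((i:ℝ)*((i:ℝ)+4)) := by
    rw [← hs2]; ring
  have hAB : ((i:ℝ)+1)*s*(2*(i:ℝ)+3) < (i:ℝ)*((i:ℝ)+3)*(2*(i:ℝ)+3)+4 := by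
    nlinarith [hA, hs0, hi', mul_nonneg (mul_nonneg (by linarith : (0:ℝ) ≤ (i:ℝ)+1) hs0) (by linarith : (0:ℝ) ≤ 2*(i:ℝ)+3)]
  nlinarith [hAB]
end

section
/- For every integer i ≥ 2, with ω = (√(i(i+4)) − i)/(2i), the inequality 2i·((1/i)·⌊(i+1)/2⌋ + χ(i)·ω) < i(2i+3)(1 − iω) holds, where χ(i) = 1 if i is even and 0 if i is odd. -/
theorem first_step_inequality (i : ℕ) (hi : 2 ≤ i)
    (ω : ℝ) (hω : ω = (Real.sqrt (i * (i + 4)) - i) / (2 * i)) :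
    2 * (i : ℝ) * ((1 / i) * (((i + 1) / 2 : ℕ) : ℝ) + (if Even i then (1 : ℝ) else 0) * ω)
      < (i : ℝ) * (2 * i + 3) * (1 - i * ω) := by
  have hiR : (2:ℝ) ≤ (i:ℝ) := by exact_mod_cast hi
  have hi0 : (0:ℝ) < (i:ℝ) := by linarith
  have hne : (i:ℝ) ≠ 0 := ne_of_gt hi0
  set s : ℝ := Real.sqrt (i * (i + 4)) with hs
  have hs2 : s ^ 2 = (i:ℝ) * (i + 4) := Real.sq_sqrt (by positivity)
  have hsnn : (0:ℝ) ≤ s := Real.sqrt_nonneg _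
  have hslt : s < (i:ℝ) + 2 := by
    rw [hs, show ((i:ℝ) * (i + 4)) = ((i:ℝ)+2)^2 - 4 by ring]
    refine (Real.sqrt_lt' (by linarith)).mpr (by nlinarith)
  have hsgt : (i:ℝ) < s := by nlinarith
  have hkey : (0:ℝ) < ((i:ℝ) + 2 - s) * ((i:ℝ) + 2 - s) :=
    mul_pos (by linarith) (by linarith)
  rcases Nat.even_or_odd i with ⟨k, hk⟩ | ⟨k, hk⟩
  · rw [if_pos ⟨k, hk⟩]
    have hfl : ((i + 1) / 2 : ℕ) = k := by omega
    have hkR : (i:ℝ) = 2 * k := by rw [hk]; push_cast; ring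
    rw [hfl, hω]
    have heq : 2 * (i:ℝ) * (1 / ↑i * ↑k + 1 * ((s - ↑i) / (2 * ↑i)))
        = 2 * ↑k + (s - ↑i) := by field_simp
    have heq2 : (↑i * (2 * ↑i + 3) * (1 - ↑i * ((s - ↑i) / (2 * ↑i))))
        = ↑i * (2 * ↑i + 3) * (2 + ↑i - s) / 2 := by field_simp; ring
    rw [heq, heq2]
    nlinarith [hkey, hs2, hiR, hsgt, hslt]
  · rw [if_neg (by simp [hk, parity_simps])]
    have hfl : ((i + 1) / 2 : ℕ) = k + 1 := by omega
    have hkR : (i:ℝ) = 2 * k + 1 := by rw [hk]; push_cast; ring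
    rw [hfl, hω]
    have heq : 2 * (i:ℝ) * (1 / ↑i * ↑(k + 1) + 0 * ((s - ↑i) / (2 * ↑i)))
        = 2 * (↑k + 1) := by push_cast; field_simp; ring
    have heq2 : (↑i * (2 * ↑i + 3) * (1 - ↑i * ((s - ↑i) / (2 * ↑i))))
        = ↑i * (2 * ↑i + 3) * (2 + ↑i - s) / 2 := by field_simp; ring
    rw [heq, heq2]
    nlinarith [hkey, hs2, hiR, hsgt, hslt]
end

section
/- For every integer i ≥ 2, δ < F₂·F₅/F₆, i.e., i²(2i+3)ω³ < 2i · i²(2i²+5i+1) / (i³(2i²+7i+4)), where ω = (√(i(i+4)) − i)/(2i). -/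
theorem delta_lt_F2F5_div_F6 (i : ℕ) (hi : 2 ≤ i)
    (ω : ℝ) (hω : ω = (Real.sqrt (i * (i + 4)) - i) / (2 * i)) :
    (i : ℝ) ^ 2 * (2 * i + 3) * ω ^ 3
      < 2 * (i : ℝ) * ((i : ℝ) ^ 2 * (2 * i ^ 2 + 5 * i + 1)) / ((i : ℝ) ^ 3 * (2 * i ^ 2 + 7 * i + 4)) := by
  have hi' : (2 : ℝ) ≤ (i : ℝ) := by exact_mod_cast hi
  have hipos : (0 : ℝ) < i := by linarith
  set x : ℝ := (i : ℝ) with hx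
  set s : ℝ := Real.sqrt (i * (i + 4)) with hsdef
  have hs0 : 0 ≤ s := Real.sqrt_nonneg _
  have hs2 : s ^ 2 = x * (x + 4) := by
    rw [hsdef, sq, Real.mul_self_sqrt (by positivity)]
  -- key inequality: A * s < B
  have key : ((x+1)*(2*x+3)*(2*x^2+7*x+4)) * s
      < x*(x+3)*(2*x+3)*(2*x^2+7*x+4) + 4*(2*x^2+5*x+1) := by
    set A : ℝ := (x+1)*(2*x+3)*(2*x^2+7*x+4) with hA
    set B : ℝ := x*(x+3)*(2*x+3)*(2*x^2+7*x+4) + 4*(2*x^2+5*x+1) with hB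
    have hApos : 0 < A := by rw [hA]; nlinarith
    have hBpos : 0 < B := by rw [hB]; nlinarith
    have hsq : (A*s)^2 < B^2 := by
      have h1 : (A*s)^2 = A^2 * (x*(x+4)) := by rw [mul_pow, hs2]
      rw [h1, hA, hB]
      nlinarith [sq_nonneg (x-2), sq_nonneg ((x-2)^2), sq_nonneg ((x-2)^3),
        mul_pos hipos hipos, hi']
    nlinarith [mul_nonneg hApos.le hs0]
  rw [hω, div_pow, mul_div_assoc', div_lt_div_iff₀ (by positivity) (by positivity)]
  have hcube : (s - x)^3 = s*(x*(x+4)) - 3*(x*(x+4))*x + 3*s*x^2 - x^3 := by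
    have : (s - x)^3 = s^2*s - 3*s^2*x + 3*s*x^2 - x^3 := by ring
    rw [this, hs2]; ring
  rw [hcube]
  have key6 := mul_lt_mul_of_pos_left key (show (0:ℝ) < 4*x^6 by positivity)
  nlinarith [key6]
end

section
/- Let ω = (√(i(i+4)) − i)/(2i), δ = i²(2i+3)ω³, L = lim_{n→∞} F_{n+1}ωⁿ = (2(i+1)+3iω)/(i+4), and γ = δ/L. Then γ < (i+1)(1+ω)/(i+2); consequently 1/i − γω > G₁/G₃ = i/(i²(i+2)) = 1/(i(i+2)). -/
set_option maxHeartbeats 2000000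


theorem gamma_inequalities (i : ℕ) (hi : 2 ≤ i)
    (ω : ℝ) (hω : ω = (Real.sqrt (i * (i + 4)) - i) / (2 * i))
    (δ : ℝ) (hδ : δ = (i : ℝ) ^ 2 * (2 * i + 3) * ω ^ 3)
    (L : ℝ) (hL : L = (2 * ((i : ℝ) + 1) + 3 * i * ω) / (i + 4))
    (γ : ℝ) (hγ : γ = δ / L) :
    γ < ((i : ℝ) + 1) * (1 + ω) / (i + 2) ∧
    1 / (i : ℝ) - γ * ω > (i : ℝ) / ((i : ℝ) ^ 2 * (i + 2)) := by
  set x : ℝ := (i : ℝ) with hxdef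
  have hx : (2:ℝ) ≤ x := by
    rw [hxdef]; exact_mod_cast hi
  have h2 : (0:ℝ) ≤ x - 2 := by linarith
  have h2b : (0:ℝ) ≤ (x-2)^2 := sq_nonneg _
  have h2c : (0:ℝ) ≤ (x-2)^3 := by positivity
  have h2d : (0:ℝ) ≤ (x-2)^4 := by positivity
  have h2e : (0:ℝ) ≤ (x-2)^5 := by positivity
  have hx0 : (0:ℝ) < x := by linarith
  set s : ℝ := Real.sqrt ((i:ℝ) * ((i:ℝ) + 4)) with hsdef
  have hs0 : 0 ≤ s := Real.sqrt_nonneg _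
  have hs2 : s ^ 2 = x * (x + 4) := Real.sq_sqrt (by nlinarith)
  have hs1 : x + 1 < s := by nlinarith [hs2, hs0]
  have hs3 : s < x + 2 := by nlinarith [hs2, hs0]
  have hq : x * ω ^ 2 + x * ω = 1 := by
    rw [hω]
    field_simp
    ring_nf
    nlinarith [hs2]
  have hωpos : 0 < ω := by
    rw [hω]
    apply div_pos <;> nlinarith
  have hLpos : 0 < L := by
    rw [hL]
    apply div_pos <;> nlinarith
  have hK1pos : 0 < (x+1)*(x*(x+2)*(x+4)*(2*x+3) - (2*x+2)) := by nlinarith [h2,h2b,h2c,h2d,h2e]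
  have hK2pos : 0 < x*(x+2)*(x+4)*(2*x+3) + (x+1)*(2*x+5) := by nlinarith [h2,h2b,h2c,h2d]
  have hP : 0 < 2*x^5 + 25*x^4 + 105*x^3 + 172*x^2 + 95*x - 4 := by nlinarith [h2,h2b,h2c,h2d,h2e]
  have hfac : ((x*(x+2)*(x+4)*(2*x+3) + (x+1)*(2*x+5)) -
      ((x+1)*(x*(x+2)*(x+4)*(2*x+3) - (2*x+2)))*ω) *
      (x*(x*(x+2)*(x+4)*(2*x+3) + (x+1)*(2*x+5)) +
       x*((x+1)*(x*(x+2)*(x+4)*(2*x+3) - (2*x+2)))*ω +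
       x*((x+1)*(x*(x+2)*(x+4)*(2*x+3) - (2*x+2)))) =
      2*x^5 + 25*x^4 + 105*x^3 + 172*x^2 + 95*x - 4 := by
    linear_combination (-(((x+1)*(x*(x+2)*(x+4)*(2*x+3) - (2*x+2)))^2)) * hq
  have hfac2pos : 0 < x*(x*(x+2)*(x+4)*(2*x+3) + (x+1)*(2*x+5)) +
       x*((x+1)*(x*(x+2)*(x+4)*(2*x+3) - (2*x+2)))*ω +
       x*((x+1)*(x*(x+2)*(x+4)*(2*x+3) - (2*x+2))) := by
    nlinarith [mul_pos hK1pos hωpos, mul_pos hx0 hK2pos, mul_pos hx0 hK1pos,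
      mul_pos hx0 (mul_pos hK1pos hωpos)]
  have hK : ((x+1)*(x*(x+2)*(x+4)*(2*x+3) - (2*x+2)))*ω <
      x*(x+2)*(x+4)*(2*x+3) + (x+1)*(2*x+5) := by
    nlinarith [hfac, hP, hfac2pos]
  have e1 : δ * ((x+2)*(x+4)) = x*(2*x+3)*(x+2)*(x+4)*((x+1)*ω - 1) := by
    rw [hδ]
    linear_combination (x*(2*x+3)*(x+2)*(x+4)*(ω-1)) * hq
  have e2 : (x+1)*(1+ω)*(2*(x+1)+3*x*ω) = (x+1)*(2*x+5+(2*x+2)*ω) := by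
    linear_combination (3*(x+1)) * hq
  have key : δ * ((x+2)*(x+4)) < (x+1)*(1+ω)*(2*(x+1)+3*x*ω) := by
    rw [e1, e2]
    nlinarith [hK]
  have h1 : γ < (x + 1) * (1 + ω) / (x + 2) := by
    rw [hγ, div_lt_div_iff₀ hLpos (by linarith : (0:ℝ) < x + 2), hL]
    rw [show (x+1)*(1+ω)*((2*(x+1)+3*x*ω)/(x+4)) = ((x+1)*(1+ω)*(2*(x+1)+3*x*ω))/(x+4)
      from by ring, lt_div_iff₀ (by linarith : (0:ℝ) < x + 4)]
    nlinarith [key]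
  refine ⟨h1, ?_⟩
  have h2 : γ * ω < (x + 1) * (1 + ω) / (x + 2) * ω :=
    mul_lt_mul_of_pos_right h1 hωpos
  have h3 : (x + 1) * (1 + ω) / (x + 2) * ω = (x+1)/(x*(x+2)) := by
    rw [div_mul_eq_mul_div, div_eq_div_iff (by linarith : (0:ℝ) < x + 2).ne'
      (by positivity : (0:ℝ) < x*(x+2)).ne']
    linear_combination ((x+1)*(x+2)) * hq
  have h4 : x/(x^2*(x+2)) = 1/x - (x+1)/(x*(x+2)) := by
    field_simp
    ring
  rw [h4] at *
  rw [h3] at h2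
  linarith
end

section
/- Let ω = (√(i(i+4)) − i)/(2i), γ = i²(2i+3)ω³ / ((2(i+1)+3iω)/(i+4)). Then ω³·G₄ < (i+1)/γ where G₄ = i²(i²+3i+1), and also 1/i − ω/γ < F₂/F₄ = 2i/(i²(2i+3)) = 2/(i(2i+3)). -/
set_option maxHeartbeats 2000000

theorem gamma_inequalities_2 (i : ℕ) (hi : 2 ≤ i)
    (ω : ℝ) (hω : ω = (Real.sqrt (i * (i + 4)) - i) / (2 * i))
    (γ : ℝ) (hγ : γ = ((i : ℝ) ^ 2 * (2 * i + 3) * ω ^ 3) / ((2 * ((i : ℝ) + 1) + 3 * i * ω) / (i + 4))) :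
    ω ^ 3 * ((i : ℝ) ^ 2 * ((i : ℝ) ^ 2 + 3 * i + 1)) < ((i : ℝ) + 1) / γ ∧
    1 / (i : ℝ) - ω / γ < 2 * (i : ℝ) / ((i : ℝ) ^ 2 * (2 * i + 3)) := by
  set x : ℝ := (i : ℝ) with hxdef
  have hx2 : (2:ℝ) ≤ x := by rw [hxdef]; exact_mod_cast hi
  have hx0 : (0:ℝ) < x := by linarith
  set s : ℝ := Real.sqrt (x * (x + 4)) with hsdef
  have hsq : s ^ 2 = x * (x + 4) := Real.sq_sqrt (by nlinarith)
  have hs0 : (0:ℝ) ≤ s := Real.sqrt_nonneg _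
  have hsx : x < s := by nlinarith [hsq, hs0, hx0]
  have hspos : (0:ℝ) < s := by linarith
  have hsum : 2 * x * ω + x = s := by
    rw [hω]; field_simp; ring
  have hω0 : (0:ℝ) < ω := by
    rw [hω]
    apply div_pos <;> linarith
  have h2s : (2 * x * ω + x) ^ 2 = x * (x + 4) := by rw [hsum]; exact hsq
  have hq : x * ω ^ 2 + x * ω = 1 := by
    have h4 : (4 * x) * (x * ω ^ 2 + x * ω) = (4 * x) * 1 := by linear_combination h2s
    exact mul_left_cancel₀ (by positivity) h4
  have hD : (0:ℝ) < 2 * (x + 1) + 3 * x * ω := by nlinarith [mul_pos hx0 hω0]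
  have hγpos : (0:ℝ) < γ := by
    rw [hγ]
    exact div_pos (mul_pos (mul_pos (pow_pos hx0 2) (by linarith)) (pow_pos hω0 3))
      (div_pos hD (by linarith))
  have hγeq : γ * (2 * (x + 1) + 3 * x * ω) = x ^ 2 * (2 * x + 3) * ω ^ 3 * (x + 4) := by
    rw [hγ]
    field_simp
  have hw3 : x ^ 2 * ω ^ 3 = (x + 1) * (x * ω) - x := by
    linear_combination (x * ω - x) * hq
  have hw6 : x ^ 4 * ω ^ 6 = x * ((x ^ 2 + 3 * x + 1) - x * (x + 1) * (x + 3) * ω) := by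
    linear_combination (x^3*ω^4 - x^3*ω^3 + x^3*ω^2 + x^2*ω^2 - x^3*ω - 2*x^2*ω + x^3 + 3*x^2 + x) * hq
  have hm : (0:ℝ) ≤ x - 2 := by linarith
  -- Inequality 1 certificates
  set E1 : ℝ := 3 + 39*x + 189*x^2 + 341*x^3 + 286*x^4 + 121*x^5 + 25*x^6 + 2*x^7 with hE1def
  set F1 : ℝ := -4 + 19*x + 201*x^2 + 589*x^3 + 751*x^4 + 486*x^5 + 167*x^6 + 29*x^7 + 2*x^8 with hF1def
  have hE1pos : (0:ℝ) < E1 := by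
    have h : E1 = 13869 + (x-2)*(29415 + (x-2)*(26123 + (x-2)*(12589 + (x-2)*(3556 + (x-2)*(589 + (x-2)*(53 + (x-2)*2)))))) := by rw [hE1def]; ring
    have hT : (0:ℝ) ≤ (x-2)*(29415 + (x-2)*(26123 + (x-2)*(12589 + (x-2)*(3556 + (x-2)*(589 + (x-2)*(53 + (x-2)*2)))))) := mul_nonneg hm (add_nonneg (by norm_num) (mul_nonneg hm (add_nonneg (by norm_num) (mul_nonneg hm (add_nonneg (by norm_num) (mul_nonneg hm (add_nonneg (by norm_num) (mul_nonneg hm (add_nonneg (by norm_num) (mul_nonneg hm (add_nonneg (by norm_num) (mul_nonneg hm (by norm_num : (0:ℝ) ≤ (2:ℝ))))))))))))))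
    linarith only [h, hT]
  have hF1nn : (0:ℝ) ≤ F1 := by
    have h : F1 = 48030 + (x-2)*(117907 + (x-2)*(123791 + (x-2)*(72581 + (x-2)*(25991 + (x-2)*(5822 + (x-2)*(797 + (x-2)*(61 + (x-2)*2))))))) := by rw [hF1def]; ring
    have hT : (0:ℝ) ≤ (x-2)*(117907 + (x-2)*(123791 + (x-2)*(72581 + (x-2)*(25991 + (x-2)*(5822 + (x-2)*(797 + (x-2)*(61 + (x-2)*2))))))) := mul_nonneg hm (add_nonneg (by norm_num) (mul_nonneg hm (add_nonneg (by norm_num) (mul_nonneg hm (add_nonneg (by norm_num) (mul_nonneg hm (add_nonneg (by norm_num) (mul_nonneg hm (add_nonneg (by norm_num) (mul_nonneg hm (add_nonneg (by norm_num) (mul_nonneg hm (add_nonneg (by norm_num) (mul_nonneg hm (by norm_num : (0:ℝ) ≤ (2:ℝ))))))))))))))))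
    linarith only [h, hT]
  have hR1 : F1 ^ 2 < E1 ^ 2 * (x * (x + 4)) := by
    have h : E1 ^ 2 * (x * (x + 4)) - F1 ^ 2 = 1309032 + (x-2)*(3606108 + (x-2)*(4335200 + (x-2)*(2984792 + (x-2)*(1297024 + (x-2)*(368924 + (x-2)*(68696 + (x-2)*(8076 + (x-2)*(544 + (x-2)*16)))))))) := by rw [hE1def, hF1def]; ring
    have hT : (0:ℝ) ≤ (x-2)*(3606108 + (x-2)*(4335200 + (x-2)*(2984792 + (x-2)*(1297024 + (x-2)*(368924 + (x-2)*(68696 + (x-2)*(8076 + (x-2)*(544 + (x-2)*16)))))))) := mul_nonneg hm (add_nonneg (by norm_num) (mul_nonneg hm (add_nonneg (by norm_num) (mul_nonneg hm (add_nonneg (by norm_num) (mul_nonneg hm (add_nonneg (by norm_num) (mul_nonneg hm (add_nonneg (by norm_num) (mul_nonneg hm (add_nonneg (by norm_num) (mul_nonneg hm (add_nonneg (by norm_num) (mul_nonneg hm (add_nonneg (by norm_num) (mul_nonneg hm (by norm_num : (0:ℝ) ≤ (16:ℝ))))))))))))))))))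
    linarith only [h, hT]
  have hEsq1 : (E1 * s) ^ 2 = E1 ^ 2 * (x * (x + 4)) := by rw [mul_pow, hsq]
  have hstep1 : F1 < E1 * s := by
    nlinarith [hEsq1, hR1, hF1nn, mul_pos hE1pos hspos]
  have hE1s : E1 * s = E1 * (2 * x * ω + x) := by rw [hsum]
  -- Inequality 2 certificates
  set E2 : ℝ := 6 + 46*x + 61*x^2 + 28*x^3 + 4*x^4 with hE2def
  set F2 : ℝ := 48*x + 128*x^2 + 109*x^3 + 36*x^4 + 4*x^5 with hF2def
  have hE2nn : (0:ℝ) ≤ E2 := by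
    have h : E2 = 630 + (x-2)*(754 + (x-2)*(325 + (x-2)*(60 + (x-2)*4))) := by rw [hE2def]; ring
    have hT : (0:ℝ) ≤ (x-2)*(754 + (x-2)*(325 + (x-2)*(60 + (x-2)*4))) := mul_nonneg hm (add_nonneg (by norm_num) (mul_nonneg hm (add_nonneg (by norm_num) (mul_nonneg hm (add_nonneg (by norm_num) (mul_nonneg hm (by norm_num : (0:ℝ) ≤ (4:ℝ))))))))
    linarith only [h, hT]
  have hF2pos : (0:ℝ) < F2 := by
    have h : F2 = 2184 + (x-2)*(3340 + (x-2)*(1966 + (x-2)*(557 + (x-2)*(76 + (x-2)*4)))) := by rw [hF2def]; ring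
    have hT : (0:ℝ) ≤ (x-2)*(3340 + (x-2)*(1966 + (x-2)*(557 + (x-2)*(76 + (x-2)*4)))) := mul_nonneg hm (add_nonneg (by norm_num) (mul_nonneg hm (add_nonneg (by norm_num) (mul_nonneg hm (add_nonneg (by norm_num) (mul_nonneg hm (add_nonneg (by norm_num) (mul_nonneg hm (by norm_num : (0:ℝ) ≤ (4:ℝ))))))))))
    linarith only [h, hT]
  have hR2 : E2 ^ 2 * (x * (x + 4)) < F2 ^ 2 := by
    have h : F2 ^ 2 - E2 ^ 2 * (x * (x + 4)) = 7056 + (x-2)*(13440 + (x-2)*(9676 + (x-2)*(3288 + (x-2)*(528 + (x-2)*32)))) := by rw [hE2def, hF2def]; ring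
    have hT : (0:ℝ) ≤ (x-2)*(13440 + (x-2)*(9676 + (x-2)*(3288 + (x-2)*(528 + (x-2)*32)))) := mul_nonneg hm (add_nonneg (by norm_num) (mul_nonneg hm (add_nonneg (by norm_num) (mul_nonneg hm (add_nonneg (by norm_num) (mul_nonneg hm (add_nonneg (by norm_num) (mul_nonneg hm (by norm_num : (0:ℝ) ≤ (32:ℝ))))))))))
    linarith only [h, hT]
  have hEsq2 : (E2 * s) ^ 2 = E2 ^ 2 * (x * (x + 4)) := by rw [mul_pow, hsq]
  have hstep2 : E2 * s < F2 := by
    exact lt_of_pow_lt_pow_left₀ 2 hF2pos.le (by rw [hEsq2]; exact hR2)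
  have hE2s : E2 * s = E2 * (2 * x * ω + x) := by rw [hsum]
  have key1 : x*(2*x+3)*(x+4)*(x^2+3*x+1)*((x^2+3*x+1) - x*(x+1)*(x+3)*ω)
      < (x+1)*(2*(x+1)+3*x*ω) := by
    rw [hE1def, hF1def] at hstep1
    rw [hE1def] at hE1s
    linarith only [hstep1, hE1s]
  have key2 : (2*x+1)*(2*x+3)*(x+4)*((x+1)*(x*ω) - x)
      < (2*x+3)*(2*x*(x+1)*ω + 3*x*(1 - x*ω)) := by
    rw [hE2def, hF2def] at hstep2
    rw [hE2def] at hE2s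
    linarith only [hstep2, hE2s]
  constructor
  · rw [lt_div_iff₀ hγpos]
    refine lt_of_mul_lt_mul_right ?_ hD.le
    have e1 : ω ^ 3 * (x ^ 2 * (x ^ 2 + 3 * x + 1)) * γ * (2 * (x + 1) + 3 * x * ω)
        = x*(2*x+3)*(x+4)*(x^2+3*x+1)*((x^2+3*x+1) - x*(x+1)*(x+3)*ω) := by
      linear_combination (ω ^ 3 * (x ^ 2 * (x ^ 2 + 3 * x + 1))) * hγeq
        + (2*x+3)*(x+4)*(x^2+3*x+1) * hw6
    linarith only [key1, e1]
  · have e3 : (2*x+1) * γ * (2 * (x + 1) + 3 * x * ω)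
        = (2*x+1)*(2*x+3)*(x+4)*((x+1)*(x*ω) - x) := by
      linear_combination (2*x+1) * hγeq + (2*x+1)*(2*x+3)*(x+4) * hw3
    have e4 : ω * (x * (2*x+3)) * (2 * (x + 1) + 3 * x * ω)
        = (2*x+3)*(2*x*(x+1)*ω + 3*x*(1 - x*ω)) := by
      linear_combination 3*x*(2*x+3) * hq
    have h2' : (2*x+1) * γ < ω * (x * (2*x+3)) := by
      refine lt_of_mul_lt_mul_right ?_ hD.le
      linarith only [key2, e3, e4]
    have hxx : (0:ℝ) < x * (2*x+3) := mul_pos hx0 (by linarith only [hx2])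
    have h2 : (2*x+1) / (x * (2*x+3)) < ω / γ := by
      rw [div_lt_div_iff₀ hxx hγpos]
      exact h2'
    have h1 : 1 / x - 2 * x / (x ^ 2 * (2 * x + 3)) = (2*x+1) / (x * (2*x+3)) := by
      field_simp
      ring
    linarith only [h1, h2]
end
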